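/- arXiv:1411.4161 — 6 statements merged into one kernel-verified Lean document; each statement's English description precedes it below -/
import Mathlib

section
/- For every non-decreasing sequence x : ℕ → ℕ (indexed from 1) and every n ≥ 1, the number of x-parking functions of length n satisfies the recursion PF(x; n) = Σ_{k=1}^{n} C(n, k) · x(1)^k · PF(x_k; n − k), where x_k is the shift of x by k and C(n, k) is the binomial coefficient. -/
def IsPF (x : ℕ → ℕ) {n : ℕ} (f : Fin n → ℕ) : Prop :=
  (∀ i, 1 ≤ f i) ∧
  ∀ k, 1 ≤ k → k ≤ n → k ≤ (Finset.univ.filter (fun i => f i ≤ x k)).card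

noncomputable def PF (x : ℕ → ℕ) (n : ℕ) : ℕ :=
  Nat.card {f : Fin n → ℕ // IsPF x f}

def shift (x : ℕ → ℕ) (s : ℕ) : ℕ → ℕ := fun m => x (s + m) - x 1

/-! ### Auxiliary lemmas -/

lemma xmono {x : ℕ → ℕ} (hx : ∀ m, 1 ≤ m → x m ≤ x (m + 1)) :
    ∀ {a b : ℕ}, 1 ≤ a → a ≤ b → x a ≤ x b := by
  intro a b ha hab
  induction b with
  | zero => omega
  | succ b ih =>
    rcases Nat.eq_or_lt_of_le hab with h | h
    · exact h ▸ le_rfl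
    · exact le_trans (ih (by omega)) (hx b (by omega))

lemma isPF_bound {y : ℕ → ℕ} {m : ℕ} {f : Fin m → ℕ} (h : IsPF y f) (i : Fin m) :
    f i ≤ y m := by
  have hm : 1 ≤ m := i.pos
  have h2 := h.2 m hm le_rfl
  have hle : (Finset.univ.filter (fun j => f j ≤ y m)).card ≤ m := by
    simpa using Finset.card_filter_le Finset.univ (fun j => f j ≤ y m)
  have hu : (Finset.univ.filter (fun j => f j ≤ y m)) = Finset.univ := by
    apply Finset.eq_univ_of_card
    simp only [Finset.card_univ, Fintype.card_fin]
    omega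
  have hi : i ∈ Finset.univ.filter (fun j => f j ≤ y m) := by
    rw [hu]; exact Finset.mem_univ i
  exact (Finset.mem_filter.mp hi).2

lemma isPF_finite (y : ℕ → ℕ) (m : ℕ) : Finite {f : Fin m → ℕ // IsPF y f} := by
  apply Finite.of_injective
    (fun f (i : Fin m) => (⟨f.1 i, Nat.lt_succ_of_le (isPF_bound f.2 i)⟩ : Fin (y m + 1)))
  intro f g h
  apply Subtype.ext
  funext i
  exact congrArg Fin.val (congrFun h i)

lemma filter_split {n : ℕ} (S : Finset (Fin n)) (p : Fin n → Prop) [DecidablePred p] :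
    (Finset.univ.filter p).card = (S.filter p).card + (Sᶜ.filter p).card := by
  rw [← Finset.card_union_of_disjoint
      (Finset.disjoint_filter_filter disjoint_compl_right),
    ← Finset.filter_union, Finset.union_compl]

lemma compl_card {n k : ℕ} {S : Finset (Fin n)} (hS : S.card = k) : Sᶜ.card = n - k := by
  simp [Finset.card_compl, hS]

lemma symm_mk {α : Type*} [LinearOrder α] (s : Finset α) {k : ℕ} (h : s.card = k)
    (j : Fin k) (p : ((s.orderIsoOfFin h) j : α) ∈ s) :
    (s.orderIsoOfFin h).symm ⟨((s.orderIsoOfFin h) j : α), p⟩ = j := by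
  rw [show (⟨((s.orderIsoOfFin h) j : α), p⟩ : {y // y ∈ s}) = (s.orderIsoOfFin h) j
      from Subtype.ext rfl]
  exact OrderIso.symm_apply_apply _ _

/-- The key counting transfer between the complement of `S` and `Fin (n - k)`. -/
lemma count_eq (x : ℕ → ℕ) {n k : ℕ} (S : Finset (Fin n)) (hSc : Sᶜ.card = n - k)
    (f : Fin n → ℕ) (g : Fin (n - k) → ℕ)
    (hfg : ∀ j, f ((Sᶜ.orderIsoOfFin hSc) j : Fin n) = g j + x 1)
    (t : ℕ) (ht : x 1 ≤ t) :
    (Finset.univ.filter (fun j : Fin (n - k) => g j ≤ t - x 1)).card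
      = (Sᶜ.filter (fun i => f i ≤ t)).card := by
  apply Finset.card_bij (fun j _ => ((Sᶜ.orderIsoOfFin hSc) j : Fin n))
  · intro j hj
    have h1 : g j ≤ t - x 1 := (Finset.mem_filter.mp hj).2
    refine Finset.mem_filter.mpr ⟨((Sᶜ.orderIsoOfFin hSc) j).2, ?_⟩
    have h2 := hfg j
    omega
  · intro a ha b hb hab
    exact (Sᶜ.orderIsoOfFin hSc).injective (Subtype.ext hab)
  · intro i hi
    have h1 : f i ≤ t := (Finset.mem_filter.mp hi).2
    have hiS : i ∈ Sᶜ := (Finset.mem_filter.mp hi).1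
    refine ⟨(Sᶜ.orderIsoOfFin hSc).symm ⟨i, hiS⟩, ?_, ?_⟩
    · refine Finset.mem_filter.mpr ⟨Finset.mem_univ _, ?_⟩
      have h3 : f i = g ((Sᶜ.orderIsoOfFin hSc).symm ⟨i, hiS⟩) + x 1 := by
        have h4 := hfg ((Sᶜ.orderIsoOfFin hSc).symm ⟨i, hiS⟩)
        rw [OrderIso.apply_symm_apply] at h4
        exact h4
      omega
    · exact congrArg Subtype.val (OrderIso.apply_symm_apply _ _)

/-! ### The building map -/

noncomputable def build (x : ℕ → ℕ) {n k : ℕ} (S : Finset (Fin n)) (hS : S.card = k)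
    (a : Fin k → Fin (x 1)) (g : Fin (n - k) → ℕ) : Fin n → ℕ :=
  fun i =>
    if h : i ∈ S then (a ((S.orderIsoOfFin hS).symm ⟨i, h⟩) : ℕ) + 1
    else g ((Sᶜ.orderIsoOfFin (compl_card hS)).symm ⟨i, Finset.mem_compl.mpr h⟩) + x 1

lemma build_mem (x : ℕ → ℕ) {n k : ℕ} (S : Finset (Fin n)) (hS : S.card = k)
    (a : Fin k → Fin (x 1)) (g : Fin (n - k) → ℕ) {i : Fin n} (h : i ∈ S) :
    build x S hS a g i = (a ((S.orderIsoOfFin hS).symm ⟨i, h⟩) : ℕ) + 1 := dif_pos h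

lemma build_notMem (x : ℕ → ℕ) {n k : ℕ} (S : Finset (Fin n)) (hS : S.card = k)
    (a : Fin k → Fin (x 1)) (g : Fin (n - k) → ℕ) {i : Fin n} (h : i ∉ S) :
    build x S hS a g i
      = g ((Sᶜ.orderIsoOfFin (compl_card hS)).symm ⟨i, Finset.mem_compl.mpr h⟩) + x 1 :=
  dif_neg h

lemma build_compl (x : ℕ → ℕ) {n k : ℕ} (S : Finset (Fin n)) (hS : S.card = k)
    (a : Fin k → Fin (x 1)) (g : Fin (n - k) → ℕ) (j : Fin (n - k)) :
    build x S hS a g ((Sᶜ.orderIsoOfFin (compl_card hS)) j : Fin n) = g j + x 1 := by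
  have hmem : ((Sᶜ.orderIsoOfFin (compl_card hS)) j : Fin n) ∉ S := by
    have h2 := ((Sᶜ.orderIsoOfFin (compl_card hS)) j).2
    exact Finset.mem_compl.mp h2
  rw [build_notMem x S hS a g hmem]
  congr 2
  exact symm_mk Sᶜ (compl_card hS) j _

lemma build_small (x : ℕ → ℕ) {n k : ℕ} (S : Finset (Fin n)) (hS : S.card = k)
    (a : Fin k → Fin (x 1)) (g : Fin (n - k) → ℕ) (hg1 : ∀ j, 1 ≤ g j) :
    Finset.univ.filter (fun i => build x S hS a g i ≤ x 1) = S := by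
  ext i
  simp only [Finset.mem_filter, Finset.mem_univ, true_and]
  by_cases h : i ∈ S
  · simp only [h, iff_true]
    rw [build_mem x S hS a g h]
    have h1 := (a ((S.orderIsoOfFin hS).symm ⟨i, h⟩)).isLt
    omega
  · simp only [h, iff_false]
    rw [build_notMem x S hS a g h]
    have h1 := hg1 ((Sᶜ.orderIsoOfFin (compl_card hS)).symm ⟨i, Finset.mem_compl.mpr h⟩)
    omega

lemma build_isPF (x : ℕ → ℕ) (hx : ∀ m, 1 ≤ m → x m ≤ x (m + 1)) {n k : ℕ}
    (hk1 : 1 ≤ k) (hkn : k ≤ n) (S : Finset (Fin n)) (hS : S.card = k)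
    (a : Fin k → Fin (x 1)) (g : Fin (n - k) → ℕ) (hg : IsPF (shift x k) g) :
    IsPF x (build x S hS a g) := by
  constructor
  · intro i
    by_cases h : i ∈ S
    · rw [build_mem x S hS a g h]; omega
    · rw [build_notMem x S hS a g h]
      have := hg.1 ((Sᶜ.orderIsoOfFin (compl_card hS)).symm ⟨i, Finset.mem_compl.mpr h⟩)
      omega
  · intro j hj1 hjn
    have hsub : S ⊆ Finset.univ.filter (fun i => build x S hS a g i ≤ x j) := by
      intro i hi
      refine Finset.mem_filter.mpr ⟨Finset.mem_univ i, ?_⟩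
      rw [build_mem x S hS a g hi]
      have h1 := (a ((S.orderIsoOfFin hS).symm ⟨i, hi⟩)).isLt
      have h2 : x 1 ≤ x j := xmono hx le_rfl hj1
      omega
    rcases le_or_gt j k with h | h
    · have hc := Finset.card_le_card hsub
      omega
    · -- j > k
      set m := j - k with hmdef
      have hkm : k + m = j := by omega
      have hm1 : 1 ≤ m := by omega
      have hmnk : m ≤ n - k := by omega
      have hgm := hg.2 m hm1 hmnk
      have hsh : shift x k m = x j - x 1 := by
        simp only [shift, hkm]
      rw [hsh] at hgm
      have hcount := count_eq x S (compl_card hS) (build x S hS a g) g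
        (build_compl x S hS a g) (x j) (xmono hx le_rfl hj1)
      have hSf : S.filter (fun i => build x S hS a g i ≤ x j) = S := by
        apply Finset.filter_eq_self.mpr
        intro i hi
        exact (Finset.mem_filter.mp (hsub hi)).2
      have hsplit := filter_split S (fun i => build x S hS a g i ≤ x j)
      rw [hSf, hS] at hsplit
      omega

/-! ### Extraction of the shifted parking function -/

def extractG (x : ℕ → ℕ) {n k : ℕ} (S : Finset (Fin n)) (hS : S.card = k)
    (f : Fin n → ℕ) : Fin (n - k) → ℕ :=
  fun j => f ((Sᶜ.orderIsoOfFin (compl_card hS)) j : Fin n) - x 1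

lemma extract_isPF (x : ℕ → ℕ) (hx : ∀ m, 1 ≤ m → x m ≤ x (m + 1)) {n k : ℕ}
    (hk1 : 1 ≤ k) (hkn : k ≤ n) (S : Finset (Fin n)) (f : Fin n → ℕ) (hf : IsPF x f)
    (hSd : S = Finset.univ.filter (fun i => f i ≤ x 1)) (hS : S.card = k) :
    IsPF (shift x k) (extractG x S hS f) := by
  have hbig : ∀ i : Fin n, i ∉ S → x 1 < f i := by
    intro i hi
    have h1 : ¬ (f i ≤ x 1) := by
      intro hle
      refine hi ?_
      rw [hSd]
      exact Finset.mem_filter.mpr ⟨Finset.mem_univ i, hle⟩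
    omega
  have hbig' : ∀ j : Fin (n - k),
      x 1 < f ((Sᶜ.orderIsoOfFin (compl_card hS)) j : Fin n) := by
    intro j
    exact hbig _ (Finset.mem_compl.mp ((Sᶜ.orderIsoOfFin (compl_card hS)) j).2)
  have hext : ∀ j, extractG x S hS f j
      = f ((Sᶜ.orderIsoOfFin (compl_card hS)) j : Fin n) - x 1 := fun _ => rfl
  constructor
  · intro j
    rw [hext j]
    have := hbig' j
    omega
  · intro m hm1 hmnk
    have hkm1 : 1 ≤ k + m := by omega
    have hkmn : k + m ≤ n := by omega
    have hcond := hf.2 (k + m) hkm1 hkmn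
    have hsplit := filter_split S (fun i => f i ≤ x (k + m))
    have hSf : S.filter (fun i => f i ≤ x (k + m)) = S := by
      apply Finset.filter_eq_self.mpr
      intro i hi
      have hi' : i ∈ Finset.univ.filter (fun i => f i ≤ x 1) := by
        rw [← hSd]; exact hi
      have h1 : f i ≤ x 1 := (Finset.mem_filter.mp hi').2
      have h2 : x 1 ≤ x (k + m) := xmono hx le_rfl hkm1
      omega
    have hcount := count_eq x S (compl_card hS) f (extractG x S hS f)
      (by
        intro j
        rw [hext j]
        have := hbig' j
        omega)
      (x (k + m)) (xmono hx le_rfl hkm1)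
    have hsh : shift x k m = x (k + m) - x 1 := rfl
    rw [hsh]
    rw [hSf, hS] at hsplit
    omega

/-! ### The triple type -/

def PFTriple (x : ℕ → ℕ) (n k : ℕ) : Type :=
  {S : Finset (Fin n) // S.card = k} × (Fin k → Fin (x 1))
    × {g : Fin (n - k) → ℕ // IsPF (shift x k) g}

instance PFTriple.finite (x : ℕ → ℕ) (n k : ℕ) : Finite (PFTriple x n k) := by
  unfold PFTriple
  haveI := isPF_finite (shift x k) (n - k)
  infer_instance

lemma PFTriple_card (x : ℕ → ℕ) (n k : ℕ) :
    Nat.card (PFTriple x n k) = n.choose k * x 1 ^ k * PF (shift x k) (n - k) := by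
  haveI := isPF_finite (shift x k) (n - k)
  unfold PFTriple
  rw [Nat.card_prod, Nat.card_prod]
  rw [Nat.card_eq_fintype_card (α := {S : Finset (Fin n) // S.card = k})]
  rw [Fintype.card_finset_len, Fintype.card_fin]
  rw [Nat.card_fun]
  rw [Nat.card_eq_fintype_card (α := Fin (x 1)), Nat.card_eq_fintype_card (α := Fin k),
    Fintype.card_fin, Fintype.card_fin]
  rw [PF, mul_assoc]

lemma nat_card_sigma {ι : Type*} [Fintype ι] {α : ι → Type*} [∀ i, Finite (α i)] :
    Nat.card (Σ i, α i) = ∑ i, Nat.card (α i) := by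
  letI : ∀ i, Fintype (α i) := fun i => Fintype.ofFinite (α i)
  simp [Nat.card_eq_fintype_card]

/-! ### The main bijection -/

noncomputable def Phi (x : ℕ → ℕ) (hx : ∀ m, 1 ≤ m → x m ≤ x (m + 1)) (n : ℕ)
    (p : Σ k : (Finset.Icc 1 n : Finset ℕ), PFTriple x n k) : {f : Fin n → ℕ // IsPF x f} :=
  ⟨build x p.2.1.1 p.2.1.2 p.2.2.1 p.2.2.2.1,
    build_isPF x hx (Finset.mem_Icc.mp p.1.2).1 (Finset.mem_Icc.mp p.1.2).2
      p.2.1.1 p.2.1.2 p.2.2.1 p.2.2.2.1 p.2.2.2.2⟩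

lemma Phi_bijective (x : ℕ → ℕ) (hx : ∀ m, 1 ≤ m → x m ≤ x (m + 1)) (n : ℕ) (hn : 1 ≤ n) :
    Function.Bijective (Phi x hx n) := by
  constructor
  · rintro ⟨⟨k, hk⟩, ⟨S, hS⟩, a, ⟨g, hg⟩⟩ ⟨⟨k', hk'⟩, ⟨S', hS'⟩, a', ⟨g', hg'⟩⟩ h
    have hb : build x S hS a g = build x S' hS' a' g' := congrArg Subtype.val h
    have hSS' : S = S' := by
      rw [← build_small x S hS a g hg.1, hb, build_small x S' hS' a' g' hg'.1]
    subst hSS'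
    have hkk' : k = k' := hS.symm.trans hS'
    subst hkk'
    have haa' : a = a' := by
      funext j
      have hmem : ((S.orderIsoOfFin hS) j : Fin n) ∈ S := ((S.orderIsoOfFin hS) j).2
      have h1 := congrFun hb ((S.orderIsoOfFin hS) j : Fin n)
      rw [build_mem x S hS a g hmem, build_mem x S hS' a' g' hmem] at h1
      have e1 : (S.orderIsoOfFin hS).symm ⟨((S.orderIsoOfFin hS) j : Fin n), hmem⟩ = j :=
        symm_mk S hS j hmem
      have e2 : (S.orderIsoOfFin hS').symm ⟨((S.orderIsoOfFin hS) j : Fin n), hmem⟩ = j :=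
        symm_mk S hS' j hmem
      simp only [e1, e2] at h1
      exact Fin.ext (by omega)
    subst haa'
    have hgg' : g = g' := by
      funext j
      have h1 := congrFun hb ((Sᶜ.orderIsoOfFin (compl_card hS)) j : Fin n)
      rw [build_compl x S hS a g j] at h1
      have hmem : ((Sᶜ.orderIsoOfFin (compl_card hS)) j : Fin n) ∉ S :=
        Finset.mem_compl.mp ((Sᶜ.orderIsoOfFin (compl_card hS)) j).2
      rw [build_notMem x S hS' a g' hmem] at h1
      have e2 : (Sᶜ.orderIsoOfFin (compl_card hS')).symm
          ⟨((Sᶜ.orderIsoOfFin (compl_card hS)) j : Fin n), Finset.mem_compl.mpr hmem⟩ = j :=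
        symm_mk Sᶜ (compl_card hS') j _
      simp only [e2] at h1
      omega
    subst hgg'
    rfl
  · rintro ⟨f, hf⟩
    set S := Finset.univ.filter (fun i => f i ≤ x 1) with hSdef
    have hk1 : 1 ≤ S.card := hf.2 1 le_rfl hn
    have hkn : S.card ≤ n := by
      have := Finset.card_filter_le (Finset.univ : Finset (Fin n)) (fun i => f i ≤ x 1)
      simpa using this
    have hbig : ∀ i : Fin n, i ∉ S → x 1 < f i := by
      intro i hi
      have : ¬ (f i ≤ x 1) := by
        intro hle
        exact hi (Finset.mem_filter.mpr ⟨Finset.mem_univ i, hle⟩)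
      omega
    have hSmem : ∀ i ∈ S, f i ≤ x 1 := fun i hi => (Finset.mem_filter.mp hi).2
    refine ⟨⟨⟨S.card, Finset.mem_Icc.mpr ⟨hk1, hkn⟩⟩, ⟨S, rfl⟩,
      fun j => ⟨f ((S.orderIsoOfFin rfl) j : Fin n) - 1, ?_⟩,
      ⟨extractG x S rfl f, extract_isPF x hx hk1 hkn S f hf hSdef rfl⟩⟩, ?_⟩
    · have h1 := hf.1 ((S.orderIsoOfFin rfl) j : Fin n)
      have h2 := hSmem _ ((S.orderIsoOfFin rfl) j).2
      omega
    · apply Subtype.ext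
      funext i
      show build x S rfl _ _ i = f i
      by_cases h : i ∈ S
      · rw [build_mem x S rfl _ _ h]
        simp only
        have e1 : (S.orderIsoOfFin rfl) ((S.orderIsoOfFin rfl).symm ⟨i, h⟩) = ⟨i, h⟩ :=
          OrderIso.apply_symm_apply _ _
        rw [e1]
        have h1 := hf.1 i
        simp only
        omega
      · rw [build_notMem x S rfl _ _ h]
        simp only [extractG]
        have e1 : (Sᶜ.orderIsoOfFin (compl_card rfl))
            ((Sᶜ.orderIsoOfFin (compl_card rfl)).symm ⟨i, Finset.mem_compl.mpr h⟩)
            = ⟨i, Finset.mem_compl.mpr h⟩ := OrderIso.apply_symm_apply _ _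
        rw [e1]
        have h1 := hbig i h
        show f i - x 1 + x 1 = f i
        omega

theorem pf_recursion (x : ℕ → ℕ) (hx : ∀ m, 1 ≤ m → x m ≤ x (m + 1))
    (n : ℕ) (hn : 1 ≤ n) :
    PF x n = ∑ k ∈ Finset.Icc 1 n, n.choose k * (x 1) ^ k * PF (shift x k) (n - k) := by
  have hcard : Nat.card {f : Fin n → ℕ // IsPF x f}
      = Nat.card (Σ k : (Finset.Icc 1 n : Finset ℕ), PFTriple x n k) :=
    (Nat.card_congr (Equiv.ofBijective _ (Phi_bijective x hx n hn))).symm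
  rw [PF, hcard, nat_card_sigma]
  rw [Finset.sum_coe_sort (Finset.Icc 1 n) (fun k => Nat.card (PFTriple x n k))]
  exact Finset.sum_congr rfl fun k _ => PFTriple_card x n k
end

section
/- For every non-decreasing sequence x : ℕ → ℕ (indexed from 1) and every n ≥ 1, the number of non-decreasing x-parking functions of length n satisfies the recursion T(x; n) = Σ_{k=1}^{n} C(k + x(1) − 1, k) · T(x_k; n − k), where x_k is the shift of x by k and C(k + x(1) − 1, k) counts the multisets of size k on x(1) elements. -/
/-- The number of non-decreasing `x`-parking functions of length `n`. -/
noncomputable def T (x : ℕ → ℕ) (n : ℕ) : ℕ :=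
  Nat.card {f : Fin n → ℕ // IsPF x f ∧ Monotone f}

open Finset


-- helper: number of small indices
lemma card_filter_lt (n k : ℕ) (hk : k ≤ n) :
    ((Finset.univ : Finset (Fin n)).filter fun i => i.1 < k).card = k := by
  have h : ((Finset.univ : Finset (Fin n)).filter fun i => i.1 < k)
      = (Finset.univ : Finset (Fin k)).map ⟨Fin.castLE hk, Fin.castLE_injective hk⟩ := by
    ext i
    simp only [mem_filter, mem_univ, true_and, mem_map, Function.Embedding.coeFn_mk]
    constructor
    · intro h; exact ⟨⟨i.1, h⟩, by ext; rfl⟩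
    · rintro ⟨j, rfl⟩; exact j.2
  rw [h, Finset.card_map, Finset.card_univ, Fintype.card_fin]

-- fiberwise sum
lemma fiber_sum {α : Type*} [Finite α] (g : α → ℕ) (s : Finset ℕ) (hg : ∀ a, g a ∈ s) :
    Nat.card α = ∑ k ∈ s, Nat.card {a : α // g a = k} := by
  classical
  haveI := Fintype.ofFinite α
  rw [Nat.card_eq_fintype_card, ← Finset.card_univ,
    Finset.card_eq_sum_card_fiberwise (fun a _ => hg a)]
  refine Finset.sum_congr rfl fun k _ => ?_
  rw [Nat.card_eq_fintype_card, Fintype.card_subtype]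

-- for monotone f : Fin n → ℕ, f i ≤ c  ↔  i < #(filter (f ≤ c))
lemma mono_le_iff {n : ℕ} {f : Fin n → ℕ} (hf : Monotone f) (c : ℕ) (i : Fin n) :
    f i ≤ c ↔ i.1 < ((Finset.univ : Finset (Fin n)).filter fun j => f j ≤ c).card := by
  classical
  constructor
  · intro h
    have hsub : ((Finset.univ : Finset (Fin n)).filter fun j => j.1 < i.1 + 1) ⊆
        ((Finset.univ : Finset (Fin n)).filter fun j => f j ≤ c) := by
      intro j hj
      simp only [mem_filter, mem_univ, true_and] at hj ⊢
      exact le_trans (hf (by omega : j ≤ i)) h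
    have := Finset.card_le_card hsub
    rwa [card_filter_lt n (i.1 + 1) i.2] at this
  · intro h
    by_contra hc
    push_neg at hc
    have hsub : ((Finset.univ : Finset (Fin n)).filter fun j => f j ≤ c) ⊆
        ((Finset.univ : Finset (Fin n)).filter fun j => j.1 < i.1) := by
      intro j hj
      simp only [mem_filter, mem_univ, true_and] at hj ⊢
      by_contra hji
      exact absurd (le_trans (hf (by omega : i ≤ j)) hj) (by omega)
    have := Finset.card_le_card hsub
    rw [card_filter_lt n i.1 (le_of_lt i.2)] at this
    omega

-- splitting a filter count at position k
lemma split_card {n k : ℕ} (hk : k ≤ n) (p : Fin n → Prop) [DecidablePred p]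
    (hlow : ∀ i : Fin n, i.1 < k → p i) :
    ((Finset.univ : Finset (Fin n)).filter p).card
      = k + ((Finset.univ : Finset (Fin (n - k))).filter
          fun j => p ⟨k + j.1, by omega⟩).card := by
  classical
  have hsplit : ((Finset.univ : Finset (Fin n)).filter p)
      = ((Finset.univ : Finset (Fin n)).filter fun i => i.1 < k) ∪
        ((Finset.univ : Finset (Fin n)).filter fun i => k ≤ i.1 ∧ p i) := by
    ext i
    simp only [mem_filter, mem_union, mem_univ, true_and]
    constructor
    · intro h
      rcases lt_or_ge i.1 k with h' | h'
      · exact Or.inl h'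
      · exact Or.inr ⟨h', h⟩
    · rintro (h | ⟨-, h⟩)
      · exact hlow i h
      · exact h
  have hdisj : Disjoint ((Finset.univ : Finset (Fin n)).filter fun i => i.1 < k)
      ((Finset.univ : Finset (Fin n)).filter fun i => k ≤ i.1 ∧ p i) := by
    rw [Finset.disjoint_left]
    intro i hi hj
    simp only [mem_filter, mem_univ, true_and] at hi hj
    omega
  rw [hsplit, Finset.card_union_of_disjoint hdisj, card_filter_lt n k hk]
  congr 1
  refine Finset.card_bij (fun i hi => ⟨i.1 - k, by
    simp only [mem_filter, mem_univ, true_and] at hi; omega⟩) ?_ ?_ ?_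
  · intro i hi
    simp only [mem_filter, mem_univ, true_and] at hi ⊢
    have : (⟨k + (i.1 - k), by omega⟩ : Fin n) = i := by
      ext; simp; omega
    rw [this]
    exact hi.2
  · intro i hi j hj h
    simp only [mem_filter, mem_univ, true_and] at hi hj
    have := congrArg Fin.val h
    simp only at this
    ext; omega
  · intro j hj
    simp only [mem_filter, mem_univ, true_and] at hj
    refine ⟨⟨k + j.1, by omega⟩, ?_, ?_⟩
    · simp only [mem_filter, mem_univ, true_and]
      exact ⟨by omega, hj⟩
    · ext; simp

noncomputable def monoSymEquiv (α : Type*) [LinearOrder α] (k : ℕ) :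
    {b : Fin k → α // Monotone b} ≃ Sym α k where
  toFun b := ⟨(List.ofFn b.1 : Multiset α), by simp⟩
  invFun s := ⟨fun i => (s.1.sort (· ≤ ·)).get ⟨i.1, by
      rw [Multiset.length_sort]
      exact lt_of_lt_of_le i.2 (le_of_eq s.2.symm)⟩, by
    intro i j hij
    exact List.Pairwise.rel_get_of_le (Multiset.pairwise_sort _ _) (by rw [Fin.le_def] at hij ⊢; exact hij)⟩
  left_inv := by
    rintro ⟨b, hb⟩
    have hsorted : ((List.ofFn b : Multiset α).sort (· ≤ ·)) = List.ofFn b := by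
      refine List.Perm.eq_of_pairwise' (Multiset.pairwise_sort _ _) (List.pairwise_ofFn.2 fun i j h => hb h.le) ?_
      exact Multiset.coe_eq_coe.mp (Multiset.sort_eq _ _)
    ext i
    dsimp only
    rw [List.get_of_eq hsorted, List.get_ofFn]
    exact congrArg b (Fin.ext (by simp))
  right_inv := by
    rintro ⟨s, hs⟩
    apply Subtype.ext
    show ((List.ofFn _ : List α) : Multiset α) = s
    have h : (List.ofFn fun i : Fin k => (Multiset.sort s (· ≤ ·)).get
        ⟨i.1, by rw [Multiset.length_sort]; omega⟩) = Multiset.sort s (· ≤ ·) := by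
      apply List.ext_get
      · simp [Multiset.length_sort, hs]
      · intro i h1 h2
        simp [List.get_ofFn]
    rw [h, Multiset.sort_eq]

def shiftDownEquiv (k m : ℕ) :
    {a : Fin k → ℕ // (∀ i, 1 ≤ a i ∧ a i ≤ m) ∧ Monotone a}
      ≃ {b : Fin k → Fin m // Monotone b} where
  toFun a := ⟨fun i => ⟨a.1 i - 1, by have := a.2.1 i; omega⟩, by
    intro i j hij
    have := a.2.2 hij
    simp only [Fin.mk_le_mk]
    omega⟩
  invFun b := ⟨fun i => (b.1 i).1 + 1, ⟨fun i => ⟨Nat.le_add_left 1 _,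
      by have := (b.1 i).2; dsimp only; omega⟩,
    fun i j hij => by
      have := b.2 hij
      rw [Fin.le_def] at this
      exact Nat.add_le_add_right this 1⟩⟩
  left_inv a := by
    apply Subtype.ext
    funext i
    have := a.2.1 i
    simp only
    omega
  right_inv b := by
    apply Subtype.ext
    funext i
    apply Fin.ext
    dsimp only
    omega

lemma card_mono_tuples (k m : ℕ) :
    Nat.card {a : Fin k → ℕ // (∀ i, 1 ≤ a i ∧ a i ≤ m) ∧ Monotone a}
      = (k + m - 1).choose k := by
  classical
  rw [Nat.card_congr (shiftDownEquiv k m), Nat.card_congr (monoSymEquiv (Fin m) k),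
    Nat.card_eq_fintype_card, Sym.card_sym_eq_choose, Fintype.card_fin]
  congr 1
  omega

section FE
variable {x : ℕ → ℕ} {n k : ℕ}

lemma fe_glue_props (hxm : ∀ a b, 1 ≤ a → a ≤ b → x a ≤ x b)
    (hk1 : 1 ≤ k) (hkn : k ≤ n)
    (a : Fin k → ℕ) (ha : (∀ i, 1 ≤ a i ∧ a i ≤ x 1) ∧ Monotone a)
    (g : Fin (n - k) → ℕ) (hg : IsPF (shift x k) g ∧ Monotone g) :
    (IsPF x (fun i : Fin n => if h : i.1 < k then a ⟨i.1, h⟩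
        else g ⟨i.1 - k, by omega⟩ + x 1) ∧
      Monotone (fun i : Fin n => if h : i.1 < k then a ⟨i.1, h⟩
        else g ⟨i.1 - k, by omega⟩ + x 1)) ∧
    ((Finset.univ : Finset (Fin n)).filter fun i =>
        (if h : i.1 < k then a ⟨i.1, h⟩ else g ⟨i.1 - k, by omega⟩ + x 1) ≤ x 1).card = k := by
  classical
  set f : Fin n → ℕ := fun i => if h : i.1 < k then a ⟨i.1, h⟩
    else g ⟨i.1 - k, by omega⟩ + x 1 with hf
  have hmono : Monotone f := by
    intro i j hij
    rw [Fin.le_def] at hij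
    by_cases hi : i.1 < k
    · by_cases hj : j.1 < k
      · simp only [hf, dif_pos hi, dif_pos hj]
        exact ha.2 (show (⟨i.1, hi⟩ : Fin k) ≤ ⟨j.1, hj⟩ from hij)
      · simp only [hf, dif_pos hi, dif_neg hj]
        have h1 := (ha.1 ⟨i.1, hi⟩).2
        have h2 := hg.1.1 ⟨j.1 - k, by omega⟩
        omega
    · have hj : ¬ j.1 < k := by omega
      simp only [hf, dif_neg hi, dif_neg hj]
      have := hg.2 (show (⟨i.1 - k, by omega⟩ : Fin (n - k)) ≤ ⟨j.1 - k, by omega⟩ by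
        simp only [Fin.mk_le_mk]; omega)
      omega
  have hlow : ∀ i : Fin n, i.1 < k → f i ≤ x 1 := by
    intro i hi
    simp only [hf, dif_pos hi]
    exact (ha.1 _).2
  have hKf : ((Finset.univ : Finset (Fin n)).filter fun i => f i ≤ x 1).card = k := by
    have : ((Finset.univ : Finset (Fin n)).filter fun i => f i ≤ x 1)
        = (Finset.univ : Finset (Fin n)).filter fun i => i.1 < k := by
      ext i
      simp only [mem_filter, mem_univ, true_and]
      constructor
      · intro h
        by_contra hi
        simp only [hf, dif_neg hi] at h
        have := hg.1.1 ⟨i.1 - k, by omega⟩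
        omega
      · exact hlow i
    rw [this, card_filter_lt n k hkn]
  refine ⟨⟨⟨?_, ?_⟩, hmono⟩, hKf⟩
  · intro i
    by_cases hi : i.1 < k
    · simp only [hf, dif_pos hi]; exact (ha.1 _).1
    · simp only [hf, dif_neg hi]
      have := hg.1.1 ⟨i.1 - k, by omega⟩
      omega
  · intro m hm1 hmn
    rw [split_card hkn (fun i => f i ≤ x m) (fun i hi =>
      le_trans (hlow i hi) (hxm 1 m le_rfl hm1))]
    by_cases hmk : m ≤ k
    · omega
    · have h1 : x 1 ≤ x m := hxm 1 m le_rfl hm1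
      have key : ((Finset.univ : Finset (Fin (n - k))).filter
            fun j => f ⟨k + j.1, by omega⟩ ≤ x m)
          = (Finset.univ : Finset (Fin (n - k))).filter
            fun j => g j ≤ shift x k (m - k) := by
        refine Finset.filter_congr fun j _ => ?_
        have hnk : ¬ (k + j.1 < k) := by omega
        simp only [hf, dif_neg hnk, shift]
        have : (⟨k + j.1 - k, by omega⟩ : Fin (n - k)) = j := by apply Fin.ext; simp only [Fin.val_mk]; omega
        rw [this]
        have hx1m : x 1 ≤ x (k + (m - k)) := hxm 1 _ le_rfl (by omega)
        have : k + (m - k) = m := by omega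
        rw [this] at hx1m
        constructor
        · intro h; rw [show k + (m - k) = m by omega]; omega
        · intro h; rw [show k + (m - k) = m by omega] at h; omega
      rw [key]
      have := hg.1.2 (m - k) (by omega) (by omega)
      omega
end FE

section FE2
variable {x : ℕ → ℕ} {n k : ℕ}

lemma fe_split_props (hxm : ∀ a b, 1 ≤ a → a ≤ b → x a ≤ x b)
    (hk1 : 1 ≤ k) (hkn : k ≤ n) (f : Fin n → ℕ)
    (hf : (IsPF x f ∧ Monotone f) ∧
      ((Finset.univ : Finset (Fin n)).filter fun i => f i ≤ x 1).card = k) :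
    ((∀ i : Fin k, 1 ≤ f ⟨i.1, lt_of_lt_of_le i.2 hkn⟩
        ∧ f ⟨i.1, lt_of_lt_of_le i.2 hkn⟩ ≤ x 1)
      ∧ Monotone (fun i : Fin k => f ⟨i.1, lt_of_lt_of_le i.2 hkn⟩)) ∧
    (IsPF (shift x k) (fun j : Fin (n - k) => f ⟨k + j.1, by omega⟩ - x 1)
      ∧ Monotone (fun j : Fin (n - k) => f ⟨k + j.1, by omega⟩ - x 1)) := by
  classical
  obtain ⟨⟨⟨hf1, hfpf⟩, hfm⟩, hK⟩ := hf
  have hle1 : ∀ i : Fin n, f i ≤ x 1 ↔ i.1 < k := by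
    intro i; rw [mono_le_iff hfm (x 1) i, hK]
  have hbig : ∀ i : Fin n, k ≤ i.1 → x 1 + 1 ≤ f i := by
    intro i hi
    have := (hle1 i).not
    simp only [not_lt, not_le] at this
    omega
  refine ⟨⟨fun i => ⟨hf1 _, (hle1 _).2 i.2⟩, fun i j hij => hfm (by
    rw [Fin.le_def] at hij ⊢; exact hij)⟩, ⟨⟨?_, ?_⟩, ?_⟩⟩
  · intro j
    refine le_tsub_of_add_le_left (hbig _ ?_)
    exact Nat.le_add_right k j.1
  · intro m hm1 hmn
    have hx1m : x 1 ≤ x (k + m) := hxm 1 _ le_rfl (by omega)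
    have key : ((Finset.univ : Finset (Fin (n - k))).filter
          fun j => f ⟨k + j.1, by omega⟩ - x 1 ≤ shift x k m)
        = (Finset.univ : Finset (Fin (n - k))).filter
          fun j => f ⟨k + j.1, by omega⟩ ≤ x (k + m) := by
      refine Finset.filter_congr fun j _ => ?_
      have := hbig ⟨k + j.1, by omega⟩ (by simp)
      simp only [shift]
      omega
    rw [key]
    have hsplit := split_card hkn (fun i => f i ≤ x (k + m)) (fun i hi =>
      le_trans ((hle1 i).2 hi) hx1m)
    have h2 := hfpf (k + m) (by omega) (by omega)
    rw [hsplit] at h2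
    exact Nat.le_of_add_le_add_left h2
  · intro i j hij
    rw [Fin.le_def] at hij
    refine Nat.sub_le_sub_right (hfm ?_) (x 1)
    rw [Fin.le_def]
    simp only [Fin.val_mk]
    omega

noncomputable def fiberEquiv (hxm : ∀ a b, 1 ≤ a → a ≤ b → x a ≤ x b)
    (hk1 : 1 ≤ k) (hkn : k ≤ n) :
    {f : Fin n → ℕ // (IsPF x f ∧ Monotone f) ∧
        ((Finset.univ : Finset (Fin n)).filter fun i => f i ≤ x 1).card = k}
      ≃ ({a : Fin k → ℕ // (∀ i, 1 ≤ a i ∧ a i ≤ x 1) ∧ Monotone a}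
          × {g : Fin (n - k) → ℕ // IsPF (shift x k) g ∧ Monotone g}) where
  toFun f :=
    ⟨⟨fun i => f.1 ⟨i.1, lt_of_lt_of_le i.2 hkn⟩, (fe_split_props hxm hk1 hkn f.1 f.2).1⟩,
     ⟨fun j => f.1 ⟨k + j.1, by omega⟩ - x 1, (fe_split_props hxm hk1 hkn f.1 f.2).2⟩⟩
  invFun p :=
    ⟨fun i => if h : i.1 < k then p.1.1 ⟨i.1, h⟩ else p.2.1 ⟨i.1 - k, by omega⟩ + x 1,
     fe_glue_props hxm hk1 hkn p.1.1 p.1.2 p.2.1 p.2.2⟩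
  left_inv := by
    rintro ⟨f, hf⟩
    apply Subtype.ext
    funext i
    dsimp only
    by_cases hi : i.1 < k
    · rw [dif_pos hi]
    · rw [dif_neg hi]
      obtain ⟨⟨⟨hf1, hfpf⟩, hfm⟩, hK⟩ := hf
      have hle1 := mono_le_iff hfm (x 1) i
      rw [hK] at hle1
      have hbig : x 1 + 1 ≤ f i := by
        have := hle1.not
        simp only [not_lt, not_le] at this
        omega
      have hidx : (⟨k + (i.1 - k), by omega⟩ : Fin n) = i := by
        apply Fin.ext; simp only [Fin.val_mk]; omega
      rw [hidx]
      omega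
  right_inv := by
    rintro ⟨⟨a, ha⟩, ⟨g, hg⟩⟩
    apply Prod.ext
    · apply Subtype.ext
      funext i
      dsimp only
      rw [dif_pos i.2]
    · apply Subtype.ext
      funext j
      dsimp only
      have hnk : ¬ (k + j.1 < k) := by omega
      rw [dif_neg hnk]
      have hidx : (⟨k + j.1 - k, by omega⟩ : Fin (n - k)) = j := by
        apply Fin.ext; simp only [Fin.val_mk]; omega
      rw [hidx]
      omega
end FE2

-- finiteness
lemma pf_finite (x : ℕ → ℕ) (n : ℕ) :
    Finite {f : Fin n → ℕ // IsPF x f ∧ Monotone f} := by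
  classical
  have hbdd : ∀ f : Fin n → ℕ, IsPF x f → ∀ i : Fin n, f i < x n + 1 := by
    intro f hf i
    rcases Nat.eq_zero_or_pos n with hn | hn
    · exact absurd i.2 (by omega)
    · have h := hf.2 n hn le_rfl
      have hsub : (Finset.univ : Finset (Fin n)).filter (fun j => f j ≤ x n)
          = Finset.univ := by
        apply Finset.eq_univ_of_card
        have := Finset.card_filter_le (Finset.univ : Finset (Fin n)) (fun j => f j ≤ x n)
        simp only [Finset.card_univ, Fintype.card_fin] at this ⊢
        omega
      have : i ∈ (Finset.univ : Finset (Fin n)).filter (fun j => f j ≤ x n) := by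
        rw [hsub]; exact Finset.mem_univ i
      simp only [Finset.mem_filter] at this
      omega
  refine Finite.of_injective (fun f => fun i : Fin n => (⟨f.1 i, hbdd f.1 f.2.1 i⟩ : Fin (x n + 1)))
    ?_
  intro f g hfg
  apply Subtype.ext
  funext i
  have := congrFun hfg i
  simpa [Fin.mk.injEq] using this

theorem pf_types_recursion (x : ℕ → ℕ) (hx : ∀ m, 1 ≤ m → x m ≤ x (m + 1))
    (n : ℕ) (hn : 1 ≤ n) :
    T x n = ∑ k ∈ Finset.Icc 1 n, (k + x 1 - 1).choose k * T (shift x k) (n - k) := by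
  classical
  have hxm : ∀ a b, 1 ≤ a → a ≤ b → x a ≤ x b := by
    intro a b ha hab
    induction b, hab using Nat.le_induction with
    | base => exact le_rfl
    | succ b hab ih => exact le_trans ih (hx b (by omega))
  haveI := pf_finite x n
  set K : {f : Fin n → ℕ // IsPF x f ∧ Monotone f} → ℕ :=
    fun f => ((Finset.univ : Finset (Fin n)).filter fun i => f.1 i ≤ x 1).card with hKdef
  have hmem : ∀ f, K f ∈ Finset.Icc 1 n := by
    intro f
    rw [Finset.mem_Icc]
    constructor
    · exact f.2.1.2 1 le_rfl hn
    · have := Finset.card_filter_le (Finset.univ : Finset (Fin n))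
        (fun i => f.1 i ≤ x 1)
      simpa using this
  rw [show T x n = Nat.card {f : Fin n → ℕ // IsPF x f ∧ Monotone f} from rfl,
    fiber_sum K (Finset.Icc 1 n) hmem]
  refine Finset.sum_congr rfl fun k hk => ?_
  rw [Finset.mem_Icc] at hk
  have e1 : {a : {f : Fin n → ℕ // IsPF x f ∧ Monotone f} // K a = k}
      ≃ {f : Fin n → ℕ // (IsPF x f ∧ Monotone f) ∧
          ((Finset.univ : Finset (Fin n)).filter fun i => f i ≤ x 1).card = k} :=
    Equiv.subtypeSubtypeEquivSubtypeInter (fun f : Fin n → ℕ => IsPF x f ∧ Monotone f) (fun f => ((Finset.univ : Finset (Fin n)).filter fun i => f i ≤ x 1).card = k)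
  rw [Nat.card_congr e1, Nat.card_congr (fiberEquiv hxm hk.1 hk.2), Nat.card_prod,
    card_mono_tuples k (x 1)]
  rfl
end

section
/- For every non-decreasing sequence x : ℕ → ℕ (indexed from 1) and every n ≥ 1, the number of x-parking functions of length n is given by the closed formula PF(x; n) = Σ_{π composition of n} (n! / (π_1! ⋯ π_{ℓ(π)}!)) · ∏_{i=1}^{ℓ(π)} Υ(x; π, i)^{π_i}. -/
/-- `Υ(x; π, i)` (with `i` 0-indexed): `Υ(x; π, 1) = x(1)` and
`Υ(x; π, i) = x(1 + π(i-1)) - x(1 + π(i-2))` for `2 ≤ i` (1-indexed). -/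
def Upsilon (x : ℕ → ℕ) {n : ℕ} (c : Composition n) (i : Fin c.length) : ℕ :=
  if i.val = 0 then x 1
  else x (1 + c.sizeUpTo i.val) - x (1 + c.sizeUpTo (i.val - 1))

open Finset

namespace PFAux

variable (x : ℕ → ℕ)

lemma xmono (hx : ∀ m, 1 ≤ m → x m ≤ x (m + 1)) :
    ∀ {a b : ℕ}, 1 ≤ a → a ≤ b → x a ≤ x b := by
  intro a b ha hab
  induction b with
  | zero => omega
  | succ b ih =>
    rcases Nat.eq_or_lt_of_le hab with h | h
    · exact h ▸ le_rfl
    · exact le_trans (ih (by omega)) (hx b (by omega))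

/-- The cut points of the intervals associated to a composition. -/
def A {n : ℕ} (c : Composition n) : ℕ → ℕ
  | 0 => 0
  | (k+1) => x (1 + c.sizeUpTo k)

lemma A_mono (hx : ∀ m, 1 ≤ m → x m ≤ x (m + 1)) {n : ℕ} (c : Composition n) :
    Monotone (A x c) := by
  apply monotone_nat_of_le_succ
  intro k
  cases k with
  | zero => exact Nat.zero_le _
  | succ k =>
    have h := c.monotone_sizeUpTo (Nat.le_succ k)
    exact xmono x hx (by omega) (by
      simp only [Nat.succ_eq_add_one] at h ⊢; omega)

@[simp] lemma A_zero {n : ℕ} (c : Composition n) : A x c 0 = 0 := rfl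

lemma A_succ {n : ℕ} (c : Composition n) (k : ℕ) :
    A x c (k + 1) = x (1 + c.sizeUpTo k) := rfl

lemma upsilon_eq {n : ℕ} (c : Composition n) (i : Fin c.length) :
    Upsilon x c i = A x c (i.val + 1) - A x c i.val := by
  rcases i with ⟨i, hi⟩
  cases i with
  | zero => simp [Upsilon, A, Composition.sizeUpTo_zero]
  | succ m => simp [Upsilon, A]

/-- The index of the interval containing `v`. -/
def blk {n : ℕ} (c : Composition n) (v : ℕ) : ℕ :=
  Nat.findGreatest (fun k => A x c k < v) (c.length - 1)

variable {x}

section blk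

variable {n : ℕ} {c : Composition n} {v : ℕ}

lemma blk_lt (hL : 0 < c.length) : blk x c v < c.length := by
  unfold blk
  exact lt_of_le_of_lt (Nat.findGreatest_le _) (by omega)

lemma A_blk_lt (hv1 : 1 ≤ v) : A x c (blk x c v) < v := by
  have h := Nat.findGreatest_spec (P := fun k => A x c k < v) (n := c.length - 1)
    (Nat.zero_le _) (show A x c 0 < v by rw [A_zero]; omega)
  exact h

lemma le_A_blk_succ (hvL : v ≤ A x c c.length) (hL : 0 < c.length) :
    v ≤ A x c (blk x c v + 1) := by
  by_cases h : blk x c v = c.length - 1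
  · rw [h]
    have h2 : c.length - 1 + 1 = c.length := by omega
    rw [h2]; exact hvL
  · have h2 : blk x c v < c.length - 1 := by
      have := Nat.findGreatest_le (P := fun k => A x c k < v) (c.length - 1)
      exact lt_of_le_of_ne this h
    have h3 : ¬ (A x c (blk x c v + 1) < v) := by
      have h4 := Nat.findGreatest_is_greatest (P := fun k => A x c k < v)
        (n := c.length - 1) (k := blk x c v + 1) (Nat.lt_succ_self _) (by omega)
      exact h4
    exact Nat.le_of_not_lt h3

lemma blk_eq (hA : Monotone (A x c)) {k : ℕ} (hk : k < c.length)
    (h1 : A x c k < v) (h2 : v ≤ A x c (k + 1)) : blk x c v = k := by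
  have hv1 : 1 ≤ v := by omega
  have hle : k ≤ blk x c v := by
    unfold blk
    exact Nat.le_findGreatest (by omega) h1
  rcases Nat.eq_or_lt_of_le hle with h | h
  · exact h.symm
  · exfalso
    have hh : A x c (k + 1) ≤ A x c (blk x c v) := hA h
    have := A_blk_lt (x := x) (c := c) (v := v) hv1
    omega

lemma blk_le_iff (hA : Monotone (A x c)) (hv1 : 1 ≤ v)
    (hvL : v ≤ A x c c.length) (hL : 0 < c.length) {m : ℕ} :
    blk x c v ≤ m ↔ v ≤ A x c (m + 1) := by
  constructor
  · intro h
    exact le_trans (le_A_blk_succ hvL hL) (hA (by omega))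
  · intro h
    by_contra hc
    have h1 : A x c (m + 1) ≤ A x c (blk x c v) := hA (by omega)
    have := A_blk_lt (x := x) (c := c) (v := v) hv1
    omega

end blk

variable (x)

/-- `f` is compatible with the composition `c`. -/
def Compat {n : ℕ} (c : Composition n) (f : Fin n → ℕ) : Prop :=
  (∀ j, 1 ≤ f j) ∧
  ∀ k < c.length,
    (Finset.univ.filter fun j => f j ≤ A x c (k + 1)).card = c.sizeUpTo (k + 1)


lemma card_filter_subtype {α : Type*} [Fintype α] (q : α → Prop) [DecidablePred q]
    (p : α → Prop) [DecidablePred p] (hpq : ∀ a, p a → q a) :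
    ((univ : Finset {a : α // q a}).filter fun a => p a.val).card =
      (univ.filter p).card := by
  refine Finset.card_bij' (fun a _ => a.val)
    (fun a ha => ⟨a, hpq a (by simpa using ha)⟩) ?_ ?_ ?_ ?_
  · intro a ha
    simp only [mem_filter, mem_univ, true_and] at ha ⊢
    exact ha
  · intro a ha
    simp only [mem_filter, mem_univ, true_and] at ha ⊢
    exact ha
  · intro a ha; rfl
  · intro a ha; rfl

lemma multinomial_image {α β : Type*} [DecidableEq α] [DecidableEq β]
    (s : Finset α) (e : α → β) (he : Set.InjOn e s) (f : β → ℕ) :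
    Nat.multinomial (s.image e) f = Nat.multinomial s (f ∘ e) := by
  have h1 := Nat.multinomial_spec (s.image e) f
  have h2 := Nat.multinomial_spec s (f ∘ e)
  rw [Finset.prod_image (fun a ha b hb => he ha hb),
    Finset.sum_image (fun a ha b hb => he ha hb)] at h1
  have hpos : 0 < ∏ i ∈ s, Nat.factorial ((f ∘ e) i) :=
    Finset.prod_pos fun i _ => Nat.factorial_pos _
  exact Nat.eq_of_mul_eq_mul_left hpos (h1.trans h2.symm)

lemma card_fiber : ∀ (L : ℕ) (α : Type) [Fintype α] [DecidableEq α] (b : Fin L → ℕ),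
    (∑ i, b i) = Fintype.card α →
    Nat.card {g : α → Fin L // ∀ k, (univ.filter fun a => g a = k).card = b k} =
      Nat.multinomial univ b := by
  intro L
  induction L with
  | zero =>
    intro α _ _ b hb
    haveI : IsEmpty α := Fintype.card_eq_zero_iff.mp (by simpa using hb.symm)
    have h1 : Nat.multinomial (univ : Finset (Fin 0)) b = 1 := by simp
    rw [h1, Nat.card_eq_one_iff_unique]
    refine ⟨⟨fun g g' => Subtype.ext (funext fun a => isEmptyElim a)⟩,
      ⟨⟨fun a => isEmptyElim a, fun k => k.elim0⟩⟩⟩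
  | succ L ih =>
    intro α _ _ b hb
    classical
    let T := Σ S : {S : Finset α // S.card = b (Fin.last L)},
      {g : {a : α // a ∉ S.val} → Fin L //
        ∀ k, (univ.filter fun a => g a = k).card = b k.castSucc}
    have hlastne : ∀ k' : Fin L, (Fin.last L : Fin (L+1)) ≠ k'.castSucc :=
      fun k' => (Fin.castSucc_lt_last k').ne'
    let Φ : T → {g : α → Fin (L + 1) // ∀ k, (univ.filter fun a => g a = k).card = b k} := by
      rintro ⟨⟨S, hS⟩, ⟨g, hg⟩⟩
      refine ⟨fun a => if h : a ∈ S then Fin.last L else (g ⟨a, h⟩).castSucc, ?_⟩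
      intro k
      rcases Fin.eq_castSucc_or_eq_last k with ⟨k', rfl⟩ | rfl
      · rw [← hg k',
          ← card_filter_subtype (fun a => a ∉ S)
            (fun a => (if h : a ∈ S then Fin.last L else (g ⟨a, h⟩).castSucc) = k'.castSucc)
            (fun a ha => by
              intro h
              simp only [dif_pos h] at ha
              exact hlastne k' ha)]
        congr 1
        apply filter_congr
        intro a _
        simp only [dif_neg a.2, Fin.castSucc_inj]
      · have h2 : (univ.filter fun a => (if h : a ∈ S then Fin.last L
            else (g ⟨a, h⟩).castSucc) = Fin.last L) = S := by
          ext a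
          by_cases h : a ∈ S
          · simp [h]
          · simp only [dif_neg h, mem_filter, mem_univ, true_and]
            simpa [h] using (Fin.castSucc_lt_last (g ⟨a, h⟩)).ne
        rw [h2, hS]
    have hinj : Function.Injective Φ := by
      rintro ⟨⟨S, hS⟩, ⟨g, hg⟩⟩ ⟨⟨S', hS'⟩, ⟨g', hg'⟩⟩ heq
      have hfun := congrArg Subtype.val heq
      simp only [Φ] at hfun
      have hSS : S = S' := by
        ext a
        constructor
        · intro h
          by_contra h'
          have h3 := congrFun hfun a
          rw [dif_pos h, dif_neg h'] at h3
          exact hlastne _ h3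
        · intro h
          by_contra h'
          have h3 := congrFun hfun a
          rw [dif_neg h', dif_pos h] at h3
          exact hlastne _ h3.symm
      subst hSS
      have hgg : g = g' := by
        funext a
        have h3 := congrFun hfun a.val
        rw [dif_neg a.2, dif_neg a.2] at h3
        exact Fin.castSucc_inj.mp h3
      subst hgg
      rfl
    have hsurj : Function.Surjective Φ := by
      rintro ⟨G, hG⟩
      refine ⟨⟨⟨univ.filter (fun a => G a = Fin.last L), hG (Fin.last L)⟩,
        ⟨fun a => (G a.val).castPred (fun h => a.2 (by simp [h])), fun k => ?_⟩⟩, ?_⟩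
      · rw [← hG k.castSucc,
          ← card_filter_subtype (fun a => a ∉ univ.filter (fun a => G a = Fin.last L))
            (fun a => G a = k.castSucc)
            (fun a ha => by simp [ha, (hlastne k).symm])]
        congr 1
        apply filter_congr
        intro a _
        rw [← Fin.castSucc_inj (b := k), Fin.castSucc_castPred]
      · apply Subtype.ext
        funext a
        simp only [Φ]
        by_cases h : G a = Fin.last L
        · rw [dif_pos (by simp [h]), h]
        · rw [dif_neg (by simp [h]), Fin.castSucc_castPred]
    rw [← Nat.card_eq_of_bijective Φ ⟨hinj, hsurj⟩]
    rw [Nat.card_eq_fintype_card, Fintype.card_sigma]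
    have hcompl : ∀ S : {S : Finset α // S.card = b (Fin.last L)},
        Fintype.card {a : α // a ∉ S.val} = Fintype.card α - b (Fin.last L) := by
      intro S
      rw [Fintype.card_subtype_compl]
      have : Fintype.card {x : α // x ∈ S.val} = S.val.card := Fintype.card_coe _
      rw [this, S.2]
    have hsum : ∑ k : Fin L, b k.castSucc = Fintype.card α - b (Fin.last L) := by
      rw [← hb, Fin.sum_univ_castSucc]
      omega
    have hterm : ∀ S : {S : Finset α // S.card = b (Fin.last L)},
        Fintype.card {g : {a : α // a ∉ S.val} → Fin L //
          ∀ k : Fin L, (univ.filter fun a => g a = k).card = b k.castSucc} =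
          Nat.multinomial (univ : Finset (Fin L)) (fun k : Fin L => b k.castSucc) := by
      intro S
      rw [← Nat.card_eq_fintype_card]
      exact ih _ (fun k => b k.castSucc) (hsum.trans (hcompl S).symm)
    rw [Finset.sum_congr rfl (fun S _ => hterm S), Finset.sum_const, Finset.card_univ,
      Fintype.card_finset_len, smul_eq_mul]
    -- multinomial recursion
    have huniv : (univ : Finset (Fin (L+1))) = insert (Fin.last L)
        ((univ : Finset (Fin L)).image Fin.castSucc) := by
      ext k
      simp only [mem_univ, true_iff, mem_insert, mem_image]
      rcases Fin.eq_castSucc_or_eq_last k with ⟨k', rfl⟩ | rfl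
      · exact Or.inr ⟨k', trivial, rfl⟩
      · exact Or.inl rfl
    rw [huniv, Nat.multinomial_insert (by
      simp only [Finset.mem_image]
      rintro ⟨k, -, hk⟩
      exact hlastne k hk.symm)]
    rw [multinomial_image _ _ (Fin.castSucc_injective L).injOn]
    rw [Finset.sum_image (fun a _ b _ h => Fin.castSucc_injective L h)]
    have : b (Fin.last L) + ∑ i : Fin L, b i.castSucc = Fintype.card α := by
      rw [← hb, Fin.sum_univ_castSucc]; omega
    rw [this]
    rfl


section CardCompat

variable {x : ℕ → ℕ} {n : ℕ} {c : Composition n}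

/-- Cumulative counts for a fiber-regular `g`. -/
lemma cumul_of_fibers (hL : 0 < c.length) {g : Fin n → Fin c.length}
    (hg : ∀ k, (univ.filter fun j => g j = k).card = c.blocksFun k) :
    ∀ k, k < c.length →
      (univ.filter fun j => (g j : ℕ) ≤ k).card = c.sizeUpTo (k + 1) := by
  intro k
  induction k with
  | zero =>
    intro hk
    have h1 : (univ.filter fun j => (g j : ℕ) ≤ 0) =
        (univ.filter fun j => g j = ⟨0, hL⟩) := by
      apply filter_congr
      intro j _
      simp [Fin.ext_iff, Nat.le_zero]
    rw [h1, hg ⟨0, hL⟩]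
    have h2 := c.sizeUpTo_succ' ⟨0, hL⟩
    simp only [Composition.sizeUpTo_zero] at h2
    simpa using h2.symm
  | succ k ih =>
    intro hk
    have hk' : k < c.length := by omega
    have h1 : (univ.filter fun j => (g j : ℕ) ≤ k + 1) =
        (univ.filter fun j => (g j : ℕ) ≤ k) ∪
          (univ.filter fun j => g j = ⟨k + 1, hk⟩) := by
      ext j
      simp only [mem_filter, mem_univ, true_and, mem_union, Fin.ext_iff]
      omega
    have hdisj : Disjoint (univ.filter fun j => (g j : ℕ) ≤ k)
        (univ.filter fun j => g j = ⟨k + 1, hk⟩) := by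
      rw [Finset.disjoint_left]
      intro j hj hj'
      simp only [mem_filter, mem_univ, true_and] at hj hj'
      rw [hj'] at hj
      exact Nat.not_succ_le_self k (by simpa using hj)
    rw [h1, Finset.card_union_of_disjoint hdisj, ih hk', hg ⟨k + 1, hk⟩]
    have h2 := c.sizeUpTo_succ' ⟨k + 1, hk⟩
    simp only [h2]

lemma compat_of_parts (hL : 0 < c.length) (hA : Monotone (A x c))
    {g : Fin n → Fin c.length}
    (hg : ∀ k, (univ.filter fun j => g j = k).card = c.blocksFun k)
    {v : Fin n → ℕ}
    (hv : ∀ j, v j ∈ Finset.Ioc (A x c (g j : ℕ)) (A x c ((g j : ℕ) + 1))) :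
    Compat x c v := by
  constructor
  · intro j
    have h2 := (Finset.mem_Ioc.mp (hv j)).1
    omega
  · intro k hk
    have h1 : (univ.filter fun j => v j ≤ A x c (k + 1)) =
        (univ.filter fun j => (g j : ℕ) ≤ k) := by
      apply filter_congr
      intro j _
      have h2 := Finset.mem_Ioc.mp (hv j)
      constructor
      · intro h
        by_contra h'
        have h3 : k + 1 ≤ (g j : ℕ) := by omega
        have h4 : A x c (k + 1) ≤ A x c (g j : ℕ) := hA h3
        simp only [not_le] at *
        omega
      · intro h
        have h4 : A x c ((g j : ℕ) + 1) ≤ A x c (k + 1) := hA (by omega)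
        exact le_trans h2.2 h4
    rw [h1, cumul_of_fibers hL hg k hk]

lemma card_compat (hx : ∀ m, 1 ≤ m → x m ≤ x (m + 1)) (hn : 0 < n) :
    Nat.card {f : Fin n → ℕ // Compat x c f} =
      Nat.multinomial univ c.blocksFun *
        ∏ i : Fin c.length, Upsilon x c i ^ c.blocksFun i := by
  classical
  have hL : 0 < c.length := c.length_pos_of_pos hn
  have hA : Monotone (A x c) := A_mono x hx c
  set G := {g : Fin n → Fin c.length //
    ∀ k, (univ.filter fun j => g j = k).card = c.blocksFun k} with hG
  set T := Σ g : G, ∀ j : Fin n,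
    (Finset.Ioc (A x c (g.val j : ℕ)) (A x c ((g.val j : ℕ) + 1)) : Finset ℕ) with hT
  let Φ : T → {f : Fin n → ℕ // Compat x c f} := fun t =>
    ⟨fun j => (t.2 j).val, compat_of_parts hL hA t.1.2 (fun j => (t.2 j).2)⟩
  have hinj : Function.Injective Φ := by
    rintro ⟨g, v⟩ ⟨g', v'⟩ heq
    have hfun := congrArg Subtype.val heq
    simp only [Φ] at hfun
    have hgg : g = g' := by
      apply Subtype.ext
      funext j
      have h2 := Finset.mem_Ioc.mp (v j).2
      have h2' := Finset.mem_Ioc.mp (v' j).2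
      have hvj : (v j).val = (v' j).val := congrFun hfun j
      have e1 : blk x c ((v j).val) = (g.val j : ℕ) :=
        blk_eq hA (g.val j).2 h2.1 h2.2
      have e2 : blk x c ((v' j).val) = (g'.val j : ℕ) :=
        blk_eq hA (g'.val j).2 h2'.1 h2'.2
      apply Fin.ext
      rw [← e1, ← e2, hvj]
    subst hgg
    have hvv : v = v' := by
      funext j
      exact Subtype.ext (congrFun hfun j)
    subst hvv
    rfl
  have hsurj : Function.Surjective Φ := by
    rintro ⟨f, hf⟩
    have hfub : ∀ j, f j ≤ A x c c.length := by
      intro j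
      have h1 := hf.2 (c.length - 1) (by omega)
      have h2 : c.length - 1 + 1 = c.length := by omega
      rw [h2, c.sizeUpTo_length] at h1
      have h3 : (univ.filter fun j => f j ≤ A x c c.length) = univ :=
        Finset.eq_univ_of_card _ (by rw [h1]; simp)
      have h4 : j ∈ univ.filter fun j => f j ≤ A x c c.length := by
        rw [h3]; exact mem_univ j
      exact (mem_filter.mp h4).2
    have hcum : ∀ m, m < c.length →
        (univ.filter fun j => blk x c (f j) ≤ m).card = c.sizeUpTo (m + 1) := by
      intro m hm
      have h1 : (univ.filter fun j => blk x c (f j) ≤ m) =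
          (univ.filter fun j => f j ≤ A x c (m + 1)) := by
        apply filter_congr
        intro j _
        exact blk_le_iff hA (hf.1 j) (hfub j) hL
      rw [h1, hf.2 m hm]
    have hgfib : ∀ k : Fin c.length,
        (univ.filter fun j => (⟨blk x c (f j), blk_lt hL⟩ : Fin c.length) = k).card =
          c.blocksFun k := by
      rintro ⟨k, hk⟩
      cases k with
      | zero =>
        have h1 : (univ.filter fun j =>
              (⟨blk x c (f j), blk_lt hL⟩ : Fin c.length) = ⟨0, hk⟩) =
            (univ.filter fun j => blk x c (f j) ≤ 0) := by
          apply filter_congr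
          intro j _
          simp [Fin.ext_iff, Nat.le_zero]
        rw [h1, hcum 0 hk]
        have h2 := c.sizeUpTo_succ' ⟨0, hk⟩
        simp only [Composition.sizeUpTo_zero] at h2
        simpa using h2
      | succ m =>
        have hm : m < c.length := by omega
        have h1 : (univ.filter fun j =>
              (⟨blk x c (f j), blk_lt hL⟩ : Fin c.length) = ⟨m + 1, hk⟩) =
            ((univ.filter fun j => blk x c (f j) ≤ m + 1) \
              (univ.filter fun j => blk x c (f j) ≤ m)) := by
          ext j
          simp only [mem_filter, mem_univ, true_and, mem_sdiff, Fin.ext_iff, not_le]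
          omega
        have hsub : (univ.filter fun j => blk x c (f j) ≤ m) ⊆
            (univ.filter fun j => blk x c (f j) ≤ m + 1) := by
          intro j hj
          simp only [mem_filter, mem_univ, true_and] at hj ⊢
          omega
        rw [h1, Finset.card_sdiff_of_subset hsub, hcum (m + 1) hk, hcum m hm]
        have h2 := c.sizeUpTo_succ' ⟨m + 1, hk⟩
        simp only [h2]
        omega
    refine ⟨⟨⟨fun j => ⟨blk x c (f j), blk_lt hL⟩, hgfib⟩,
      fun j => ⟨f j, Finset.mem_Ioc.mpr
        ⟨A_blk_lt (hf.1 j), le_A_blk_succ (hfub j) hL⟩⟩⟩,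
      Subtype.ext (funext fun j => rfl)⟩
  rw [← Nat.card_eq_of_bijective Φ ⟨hinj, hsurj⟩, Nat.card_eq_fintype_card,
    Fintype.card_sigma]
  have hterm : ∀ g : G, Fintype.card (∀ j : Fin n,
      (Finset.Ioc (A x c (g.val j : ℕ)) (A x c ((g.val j : ℕ) + 1)) : Finset ℕ)) =
      ∏ i : Fin c.length, Upsilon x c i ^ c.blocksFun i := by
    rintro ⟨g, hg⟩
    rw [Fintype.card_pi]
    have h1 : ∀ j : Fin n, Fintype.card
        (Finset.Ioc (A x c (g j : ℕ)) (A x c ((g j : ℕ) + 1)) : Finset ℕ) =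
        Upsilon x c (g j) := by
      intro j
      rw [Fintype.card_coe, Nat.card_Ioc, upsilon_eq]
    rw [Finset.prod_congr rfl fun j _ => h1 j]
    rw [← Finset.prod_fiberwise_of_maps_to (g := g) (fun j _ => mem_univ (g j))
      (fun j => Upsilon x c (g j))]
    apply Finset.prod_congr rfl
    intro k _
    have h2 : ∀ j ∈ univ.filter fun j => g j = k,
        Upsilon x c (g j) = Upsilon x c k := by
      intro j hj
      rw [(mem_filter.mp hj).2]
    rw [Finset.prod_congr rfl h2, Finset.prod_const, hg k]
  rw [Finset.sum_congr rfl fun g _ => hterm g, Finset.sum_const, Finset.card_univ,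
    smul_eq_mul]
  congr 1
  have h3 := card_fiber c.length (Fin n) c.blocksFun
    (by rw [c.sum_blocksFun, Fintype.card_fin])
  rw [← h3, Nat.card_eq_fintype_card]

end CardCompat

section Decomp

variable {x : ℕ → ℕ} {n : ℕ}

lemma compat_le {c : Composition n} (hL : 0 < c.length) {f : Fin n → ℕ}
    (hf : Compat x c f) (j : Fin n) : f j ≤ A x c c.length := by
  have h1 := hf.2 (c.length - 1) (by omega)
  have h2 : c.length - 1 + 1 = c.length := by omega
  rw [h2, c.sizeUpTo_length] at h1
  have h3 : (univ.filter fun j => f j ≤ A x c c.length) = univ :=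
    Finset.eq_univ_of_card _ (by rw [h1]; simp)
  have h4 : j ∈ univ.filter fun j => f j ≤ A x c c.length := by
    rw [h3]; exact mem_univ j
  exact (mem_filter.mp h4).2

lemma finite_compat {c : Composition n} (hn : 0 < n) :
    Finite {f : Fin n → ℕ // Compat x c f} := by
  have hL : 0 < c.length := c.length_pos_of_pos hn
  apply Finite.of_injective
    (fun f : {f : Fin n → ℕ // Compat x c f} =>
      (fun j => (⟨f.val j, Nat.lt_succ_of_le (compat_le hL f.2 j)⟩ :
        Fin (A x c c.length + 1)) : Fin n → Fin (A x c c.length + 1)))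
  intro f f' heq
  apply Subtype.ext
  funext j
  have := congrFun heq j
  exact congrArg Fin.val this

lemma isPF_of_compat (hx : ∀ m, 1 ≤ m → x m ≤ x (m + 1)) {c : Composition n}
    {f : Fin n → ℕ} (hf : Compat x c f) (hn : 0 < n) : IsPF x f := by
  refine ⟨hf.1, ?_⟩
  intro k hk1 hkn
  have hL : 0 < c.length := c.length_pos_of_pos hn
  have hP0 : c.sizeUpTo 0 < k := by
    rw [Composition.sizeUpTo_zero]; omega
  set i := Nat.findGreatest (fun t => c.sizeUpTo t < k) (c.length - 1) with hi
  have hiL : i < c.length :=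
    lt_of_le_of_lt (Nat.findGreatest_le _) (by omega)
  have h1 : c.sizeUpTo i < k := by
    have := Nat.findGreatest_spec (P := fun t => c.sizeUpTo t < k)
      (n := c.length - 1) (Nat.zero_le _) hP0
    exact this
  have h2 : k ≤ c.sizeUpTo (i + 1) := by
    by_cases h : i = c.length - 1
    · have h3 : i + 1 = c.length := by omega
      rw [h3, c.sizeUpTo_length]; exact hkn
    · have hlt : i < c.length - 1 :=
        lt_of_le_of_ne (Nat.findGreatest_le _) h
      have h4 := Nat.findGreatest_is_greatest (P := fun t => c.sizeUpTo t < k)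
        (n := c.length - 1) (k := i + 1) (Nat.lt_succ_self _) (by omega)
      simp only [not_lt] at h4
      exact h4
  have hcount := hf.2 i hiL
  have hxk : A x c (i + 1) ≤ x k := by
    rw [A_succ]
    exact xmono x hx (by omega) (by omega)
  calc k ≤ c.sizeUpTo (i + 1) := h2
    _ = (univ.filter fun j => f j ≤ A x c (i + 1)).card := hcount.symm
    _ ≤ (univ.filter fun j => f j ≤ x k).card := by
        apply Finset.card_le_card
        intro j hj
        simp only [mem_filter, mem_univ, true_and] at hj ⊢
        omega

lemma compat_unique {c c' : Composition n} {f : Fin n → ℕ}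
    (h : Compat x c f) (h' : Compat x c' f) : c = c' := by
  have key : ∀ k, k ≤ c.length → k ≤ c'.length →
      c.sizeUpTo k = c'.sizeUpTo k := by
    intro k
    induction k with
    | zero => intro _ _; simp [Composition.sizeUpTo_zero]
    | succ k ih =>
      intro hk hk'
      have e1 := h.2 k (by omega)
      have e2 := h'.2 k (by omega)
      rw [← e1, ← e2]
      congr 2
      rw [A_succ, A_succ, ih (by omega) (by omega)]
  have hlen : c.length = c'.length := by
    by_contra hne
    rcases Nat.lt_or_ge c.length c'.length with hlt | hge
    · have e1 : c'.sizeUpTo c.length = n := by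
        rw [← key c.length le_rfl (le_of_lt hlt), c.sizeUpTo_length]
      have e2 : c'.sizeUpTo c.length < c'.sizeUpTo c'.length :=
        lt_of_lt_of_le (c'.sizeUpTo_strict_mono hlt)
          (c'.monotone_sizeUpTo (by omega))
      rw [e1, c'.sizeUpTo_length] at e2
      omega
    · have hlt : c'.length < c.length := by omega
      have e1 : c.sizeUpTo c'.length = n := by
        rw [key c'.length (le_of_lt hlt) le_rfl, c'.sizeUpTo_length]
      have e2 : c.sizeUpTo c'.length < c.sizeUpTo c.length :=
        lt_of_lt_of_le (c.sizeUpTo_strict_mono hlt)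
          (c.monotone_sizeUpTo (by omega))
      rw [e1, c.sizeUpTo_length] at e2
      omega
  have hblocks : c.blocks = c'.blocks := by
    apply List.ext_getElem
    · exact hlen
    · intro i hi hi'
      have hic : i < c.length := hi
      have hic' : i < c'.length := hi'
      have e1 := c.sizeUpTo_succ hic
      have e2 := c'.sizeUpTo_succ hic'
      have e3 := key i (by omega) (by omega)
      have e4 := key (i + 1) (by omega) (by omega)
      omega
  exact Composition.ext hblocks

end Decomp

end PFAux

theorem pf_closed_formula (x : ℕ → ℕ) (hx : ∀ m, 1 ≤ m → x m ≤ x (m + 1))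
    (n : ℕ) (hn : 1 ≤ n) :
    PF x n = ∑ c : Composition n,
      Nat.multinomial Finset.univ c.blocksFun *
        ∏ i : Fin c.length, (Upsilon x c i) ^ c.blocksFun i := by
  classical
  have hn0 : 0 < n := hn
  let Ψ : (Σ c : Composition n, {f : Fin n → ℕ // PFAux.Compat x c f}) →
      {f : Fin n → ℕ // IsPF x f} :=
    fun t => ⟨t.2.val, PFAux.isPF_of_compat hx t.2.2 hn0⟩
  have hinj : Function.Injective Ψ := by
    rintro ⟨c, f, hf⟩ ⟨c', f', hf'⟩ heq
    have hfun : f = f' := congrArg Subtype.val heq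
    subst hfun
    have hcc : c = c' := PFAux.compat_unique hf hf'
    subst hcc
    rfl
  have hsurj : Function.Surjective Ψ := by
    rintro ⟨f, hf⟩
    set s : ℕ → ℕ := fun t => Nat.rec (motive := fun _ => ℕ) 0
      (fun _ prev => (Finset.univ.filter fun j => f j ≤ x (1 + prev)).card) t with hs
    have hsS : ∀ t, s (t + 1) = (Finset.univ.filter fun j => f j ≤ x (1 + s t)).card :=
      fun t => rfl
    have hcnt_le : ∀ m, (Finset.univ.filter fun j => f j ≤ x m).card ≤ n := by
      intro m
      calc (Finset.univ.filter fun j => f j ≤ x m).card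
          ≤ (univ : Finset (Fin n)).card := Finset.card_filter_le _ _
        _ = n := by simp
    have hsle : ∀ t, s t ≤ n := by
      intro t
      cases t with
      | zero => simp [hs]
      | succ t => rw [hsS]; exact hcnt_le _
    have hpark : ∀ k, 1 ≤ k → k ≤ n →
        k ≤ (Finset.univ.filter fun j => f j ≤ x k).card := hf.2
    have hcnt_mono : ∀ a b : ℕ, 1 ≤ a → a ≤ b →
        (univ.filter fun j => f j ≤ x a).card ≤ (univ.filter fun j => f j ≤ x b).card := by
      intro a b ha hab
      apply Finset.card_le_card
      intro j hj
      simp only [mem_filter, mem_univ, true_and] at hj ⊢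
      exact le_trans hj (PFAux.xmono x hx ha hab)
    have hstep : ∀ t, s t < n → s t + 1 ≤ s (t + 1) := by
      intro t ht
      rw [hsS, Nat.add_comm 1 (s t)]
      exact hpark (s t + 1) (by omega) (by omega)
    have hsmono : ∀ t, s t ≤ s (t + 1) := by
      intro t
      by_cases ht : s t < n
      · have := hstep t ht; omega
      · have hstn : s t = n := by have := hsle t; omega
        rw [hsS, hstn]
        have h1 := hpark n (by omega) le_rfl
        have h2 := hcnt_mono n (1 + n) (by omega) (by omega)
        omega
    have hsn : s n = n := by
      have claim : ∀ t, min t n ≤ s t := by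
        intro t
        induction t with
        | zero => simp [hs]
        | succ t ih =>
          by_cases ht : s t < n
          · have := hstep t ht; omega
          · have h1 := hsle t
            have h2 := hsmono t
            omega
      have h1 := claim n
      have h2 := hsle n
      omega
    have hex : ∃ t, s t = n := ⟨n, hsn⟩
    set L := Nat.find hex with hL
    have hsL : s L = n := Nat.find_spec hex
    have hslt : ∀ t, t < L → s t < n := by
      intro t ht
      have h1 := Nat.find_min hex ht
      have h2 := hsle t
      omega
    have htel : ∀ m, ((List.range m).map fun t => s (t + 1) - s t).sum = s m := by
      intro m
      induction m with
      | zero => simp [hs]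
      | succ m ih =>
        rw [List.range_succ, List.map_append, List.sum_append]
        simp only [List.map_cons, List.map_nil, List.sum_cons, List.sum_nil]
        have := hsmono m
        omega
    have hpos : ∀ i ∈ (List.range L).map fun t => s (t + 1) - s t, 0 < i := by
      intro i hi
      simp only [List.mem_map, List.mem_range] at hi
      obtain ⟨t, ht, rfl⟩ := hi
      have h1 := hslt t ht
      have h2 := hstep t h1
      omega
    have hsum : ((List.range L).map fun t => s (t + 1) - s t).sum = n := by
      rw [htel, hsL]
    set c₀ : Composition n :=
      ⟨(List.range L).map fun t => s (t + 1) - s t, fun {i} => hpos i, hsum⟩ with hc₀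
    have hlen : c₀.length = L := by
      simp [hc₀, Composition.length]
    have hsize : ∀ k, k ≤ L → c₀.sizeUpTo k = s k := by
      intro k hk
      show ((c₀.blocks).take k).sum = s k
      have hb : c₀.blocks = (List.range L).map fun t => s (t + 1) - s t := rfl
      rw [hb, ← List.map_take, List.take_range, min_eq_left hk, htel]
    have hcompat : PFAux.Compat x c₀ f := by
      refine ⟨hf.1, ?_⟩
      intro k hk
      rw [hlen] at hk
      have e1 : PFAux.A x c₀ (k + 1) = x (1 + s k) := by
        rw [PFAux.A_succ, hsize k (by omega)]
      rw [e1, hsize (k + 1) (by omega)]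
    exact ⟨⟨c₀, f, hcompat⟩, Subtype.ext rfl⟩
  haveI hfin : ∀ c : Composition n, Finite {f : Fin n → ℕ // PFAux.Compat x c f} :=
    fun c => PFAux.finite_compat hn0
  letI : ∀ c : Composition n, Fintype {f : Fin n → ℕ // PFAux.Compat x c f} :=
    fun c => Fintype.ofFinite _
  unfold PF
  rw [← Nat.card_eq_of_bijective Ψ ⟨hinj, hsurj⟩, Nat.card_eq_fintype_card,
    Fintype.card_sigma]
  apply Finset.sum_congr rfl
  intro c _
  rw [← Nat.card_eq_fintype_card]
  exact PFAux.card_compat hx hn0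
end

section
/- For every non-decreasing sequence x : ℕ → ℕ (indexed from 1) and every n ≥ 1, the number of non-decreasing x-parking functions of length n is given by the closed formula T(x; n) = Σ_{π composition of n} ∏_{i=1}^{ℓ(π)} C(π_i + Υ(x; π, i) − 1, π_i), where C(π_i + Υ(x; π, i) − 1, π_i) counts the multisets of size π_i on Υ(x; π, i) elements. -/
namespace PFAux

/-- helper: a finset of `Fin n` with more than `k` elements has an element with index `≥ k`. -/
lemma exists_ge_of_card (n k : ℕ) (S : Finset (Fin n)) (h : k < S.card) :
    ∃ i ∈ S, k ≤ i.1 := by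
  by_contra hc
  push_neg at hc
  have : S.card ≤ k := by
    have := Finset.card_le_card_of_injOn (fun i : Fin n => i.1)
      (fun i hi => Finset.mem_range.2 (hc i hi)) (fun a _ b _ hab => Fin.ext hab)
    simpa using this
  omega

lemma card_filter_val_lt (n k : ℕ) (h : k ≤ n) :
    (Finset.univ.filter (fun i : Fin n => i.1 < k)).card = k := by
  have : (Finset.univ.filter (fun i : Fin n => i.1 < k)) =
      (Finset.univ : Finset (Fin k)).map ⟨Fin.castLE h, fun a b hab => by
        simpa [Fin.ext_iff] using hab⟩ := by
    ext i
    simp only [Finset.mem_filter, Finset.mem_univ, true_and, Finset.mem_map,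
      Function.Embedding.coeFn_mk]
    constructor
    · intro hi; exact ⟨⟨i.1, hi⟩, rfl⟩
    · rintro ⟨a, rfl⟩; exact a.2
  rw [this, Finset.card_map, Finset.card_univ, Fintype.card_fin]

/-- gap lemma for strictly monotone nat sequences on `Fin m`. -/
lemma gap {m : ℕ} (e : Fin m → ℕ) (he : ∀ i j : Fin m, i.1 < j.1 → e i < e j) :
    ∀ (d : ℕ) (i j : Fin m), i.1 + d = j.1 → e i + d ≤ e j := by
  intro d
  induction d with
  | zero =>
    intro i j hij
    have : i = j := Fin.ext (by omega)
    subst this; omega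
  | succ d ih =>
    intro i j hij
    have hmid : i.1 + d < m := by omega
    have h1 := ih i ⟨i.1 + d, hmid⟩ rfl
    have h2 := he ⟨i.1 + d, hmid⟩ j (by simp only; omega)
    omega

/-- bounded monotone tuples -/
def Q (u m : ℕ) : Type := {g : Fin m → ℕ // Monotone g ∧ ∀ i, 1 ≤ g i ∧ g i ≤ u}

instance (u m : ℕ) : Finite (Q u m) := by
  have : Function.Injective (fun g : Q u m => fun i : Fin m => (⟨g.1 i, by
      have := (g.2.2 i).2; omega⟩ : Fin (u + 1))) := by
    intro g g' h
    apply Subtype.ext; funext i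
    have := congrFun h i
    simpa [Fin.ext_iff] using this
  exact Finite.of_injective _ this

lemma card_Q_pos (u m : ℕ) (hu : 1 ≤ u) :
    Nat.card (Q u m) = (u + m - 1).choose m := by
  have hN : ∀ (g : Q u m) (i : Fin m), g.1 i - 1 + i.1 < u + m - 1 := by
    intro g i
    have h1 := (g.2.2 i).1
    have h2 := (g.2.2 i).2
    have := i.2
    omega
  have hsm : ∀ g : Q u m,
      StrictMono (fun i : Fin m => (⟨g.1 i - 1 + i.1, hN g i⟩ : Fin (u + m - 1))) := by
    intro g a b hab
    have h1 : g.1 a ≤ g.1 b := g.2.1 (le_of_lt hab)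
    have h2 := (g.2.2 a).1
    have hab' : a.1 < b.1 := hab
    simp only [Fin.mk_lt_mk]
    omega
  set φ : Q u m → {s : Finset (Fin (u + m - 1)) // s.card = m} := fun g =>
    ⟨Finset.univ.image (fun i : Fin m => (⟨g.1 i - 1 + i.1, hN g i⟩ : Fin (u + m - 1))),
      by
        rw [Finset.card_image_of_injective _ (hsm g).injective, Finset.card_univ,
          Fintype.card_fin]⟩ with hφ
  have hbij : Function.Bijective φ := by
    constructor
    · intro g g' h
      have hs : (φ g).1 = (φ g').1 := congrArg Subtype.val h
      have e1 := Finset.orderEmbOfFin_unique (φ g).2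
        (f := fun i : Fin m => (⟨g.1 i - 1 + i.1, hN g i⟩ : Fin (u + m - 1)))
        (fun i => Finset.mem_image_of_mem _ (Finset.mem_univ i)) (hsm g)
      have e2 := Finset.orderEmbOfFin_unique (φ g).2
        (f := fun i : Fin m => (⟨g'.1 i - 1 + i.1, hN g' i⟩ : Fin (u + m - 1)))
        (fun i => by
          rw [hs]; exact Finset.mem_image_of_mem _ (Finset.mem_univ i)) (hsm g')
      have e3 := e1.trans e2.symm
      apply Subtype.ext; funext i
      have := congrFun e3 i
      simp only [Fin.mk.injEq] at this
      have h1 := (g.2.2 i).1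
      have h2 := (g'.2.2 i).1
      omega
    · rintro ⟨s, hs⟩
      set e := s.orderEmbOfFin hs with he
      have hgap : ∀ (d : ℕ) (i j : Fin m), i.1 + d = j.1 → (e i).1 + d ≤ (e j).1 :=
        fun d i j h => gap (fun i => (e i).1)
          (fun i j hij => e.strictMono (show i < j from hij)) d i j h
      set g : Fin m → ℕ := fun i => (e i).1 - i.1 + 1 with hg
      have hgmono : Monotone g := by
        intro a b hab
        have := hgap (b.1 - a.1) a b (by omega)
        have hab' : a.1 ≤ b.1 := hab
        simp only [hg]
        omega
      have hgbound : ∀ i, 1 ≤ g i ∧ g i ≤ u := by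
        intro i
        have him : i.1 < m := i.2
        have h1 := hgap (m - 1 - i.1) i ⟨m - 1, by omega⟩ (by simp only; omega)
        have h2 : (e ⟨m - 1, by omega⟩).1 < u + m - 1 := (e _).2
        constructor
        · simp [hg]
        · simp only [hg]; omega
      refine ⟨⟨g, hgmono, hgbound⟩, ?_⟩
      apply Subtype.ext
      show Finset.univ.image _ = s
      have hfe : (fun i : Fin m => (⟨g i - 1 + i.1, hN ⟨g, hgmono, hgbound⟩ i⟩ :
          Fin (u + m - 1))) = ⇑e := by
        funext i
        have him : i.1 < m := i.2
        apply Fin.ext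
        have hle := hgap i.1 ⟨0, by omega⟩ i (by simp only; omega)
        simp only [hg]
        omega
      rw [hfe]
      apply Finset.coe_injective
      rw [Finset.coe_image, Finset.coe_univ, Set.image_univ]
      exact s.range_orderEmbOfFin hs
  rw [Nat.card_eq_of_bijective φ hbij, Nat.card_eq_fintype_card,
    Fintype.card_finset_len, Fintype.card_fin]

lemma card_Q (u m : ℕ) : Nat.card (Q u m) = Nat.multichoose u m := by
  rcases Nat.eq_zero_or_pos u with hu | hu
  · subst hu
    rcases Nat.eq_zero_or_pos m with hm | hm
    · subst hm
      have : Unique (Q 0 0) :=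
        { default := ⟨fun i => i.elim0,
            ⟨fun a => a.elim0, fun i => i.elim0⟩⟩
          uniq := fun a => Subtype.ext (funext fun i => i.elim0) }
      rw [Nat.card_unique, Nat.multichoose_zero_right]
    · have : IsEmpty (Q 0 m) := ⟨fun g => by have := (g.2.2 ⟨0, hm⟩).1; have := (g.2.2 ⟨0, hm⟩).2; omega⟩
      rw [Nat.card_of_isEmpty]
      rcases m with _ | m
      · omega
      · simp [Nat.multichoose_zero_succ]
  · rw [card_Q_pos u m hu, Nat.multichoose_eq]

/-- monotone tuples with pointwise bounds -/
def Mon (x : ℕ → ℕ) (n : ℕ) : Type :=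
  {f : Fin n → ℕ // Monotone f ∧ ∀ k : Fin n, 1 ≤ f k ∧ f k ≤ x (k.1 + 1)}

instance (x : ℕ → ℕ) (n : ℕ) : Finite (Mon x n) := by
  have : Function.Injective (fun f : Mon x n => fun k : Fin n =>
      (⟨f.1 k, by have := (f.2.2 k).2; omega⟩ : Fin (x (k.1 + 1) + 1))) := by
    intro f f' h
    apply Subtype.ext; funext k
    have := congrFun h k
    simpa [Fin.ext_iff] using this
  exact Finite.of_injective _ this

lemma xle (x : ℕ → ℕ) (hx : ∀ m, 1 ≤ m → x m ≤ x (m + 1)) :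
    ∀ a b, 1 ≤ a → a ≤ b → x a ≤ x b := by
  intro a b ha hab
  induction b, hab using Nat.le_induction with
  | base => exact le_rfl
  | succ b hb ih => exact ih.trans (hx b (ha.trans hb))

lemma T_eq (x : ℕ → ℕ) (n : ℕ) : T x n = Nat.card (Mon x n) := by
  apply Nat.card_congr
  apply Equiv.subtypeEquivRight
  intro f
  constructor
  · rintro ⟨⟨h1, h2⟩, hmono⟩
    refine ⟨hmono, fun k => ⟨h1 k, ?_⟩⟩
    have hkn : k.1 < n := k.2
    have hk := h2 (k.1 + 1) (by omega) (by omega)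
    obtain ⟨i, hiS, hik⟩ := exists_ge_of_card n k.1
      (Finset.univ.filter (fun i => f i ≤ x (k.1 + 1))) (by omega)
    have hle : f k ≤ f i := hmono (Fin.le_def.mpr hik)
    have := (Finset.mem_filter.1 hiS).2
    omega
  · rintro ⟨hmono, hb⟩
    refine ⟨⟨fun k => (hb k).1, fun k hk1 hkn => ?_⟩, hmono⟩
    have hsub : Finset.univ.filter (fun i : Fin n => i.1 < k) ⊆
        Finset.univ.filter (fun i => f i ≤ x k) := by
      intro i hi
      simp only [Finset.mem_filter, Finset.mem_univ, true_and] at hi ⊢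
      have hkn' : k - 1 < n := by omega
      have h1 : f i ≤ f ⟨k - 1, hkn'⟩ := hmono (Fin.le_def.mpr (by simp only; omega))
      have h2 : f ⟨k - 1, hkn'⟩ ≤ x (k - 1 + 1) := (hb ⟨k - 1, hkn'⟩).2
      have h3 : x (k - 1 + 1) = x k := congrArg x (by omega)
      omega
    calc k = (Finset.univ.filter (fun i : Fin n => i.1 < k)).card :=
          (card_filter_val_lt n k hkn).symm
      _ ≤ _ := Finset.card_le_card hsub

def shift (x : ℕ → ℕ) (b : ℕ) : ℕ → ℕ := fun m => x (m + b) - x 1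

lemma shift_hx (x : ℕ → ℕ) (hx : ∀ m, 1 ≤ m → x m ≤ x (m + 1)) (b : ℕ) :
    ∀ m, 1 ≤ m → shift x b m ≤ shift x b (m + 1) := by
  intro m hm
  exact Nat.sub_le_sub_right (xle x hx (m + b) (m + 1 + b) (by omega) (by omega)) _

def glue (x : ℕ → ℕ) {n : ℕ} (j : Fin n) (g : Fin (j.1 + 1) → ℕ)
    (h : Fin (n - (j.1 + 1)) → ℕ) : Fin n → ℕ := fun k =>
  if hk : k.1 ≤ j.1 then g ⟨k.1, by omega⟩
  else h ⟨k.1 - (j.1 + 1), by have := k.2; omega⟩ + x 1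

lemma glue_le (x : ℕ → ℕ) {n : ℕ} (j : Fin n) (g : Fin (j.1 + 1) → ℕ)
    (h : Fin (n - (j.1 + 1)) → ℕ) (k : Fin n) (hk : k.1 ≤ j.1) :
    glue x j g h k = g ⟨k.1, by omega⟩ := dif_pos hk

lemma glue_gt (x : ℕ → ℕ) {n : ℕ} (j : Fin n) (g : Fin (j.1 + 1) → ℕ)
    (h : Fin (n - (j.1 + 1)) → ℕ) (k : Fin n) (hk : ¬ k.1 ≤ j.1) :
    glue x j g h k = h ⟨k.1 - (j.1 + 1), by have := k.2; omega⟩ + x 1 := dif_neg hk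

lemma Mon_rec (x : ℕ → ℕ) (hx : ∀ m, 1 ≤ m → x m ≤ x (m + 1)) (n : ℕ) (hn : 1 ≤ n) :
    Nat.card (Mon x n) = ∑ j : Fin n,
      Nat.multichoose (x 1) (j.1 + 1) * Nat.card (Mon (shift x (j.1 + 1)) (n - (j.1 + 1))) := by
  classical
  have hΦprop : ∀ (j : Fin n) (g : Q (x 1) (j.1 + 1)) (h : Mon (shift x (j.1 + 1)) (n - (j.1 + 1))),
      Monotone (glue x j g.1 h.1) ∧ ∀ k : Fin n, 1 ≤ glue x j g.1 h.1 k ∧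
        glue x j g.1 h.1 k ≤ x (k.1 + 1) := by
    intro j g h
    constructor
    · intro a b hab
      have hab' : a.1 ≤ b.1 := hab
      by_cases ha : a.1 ≤ j.1 <;> by_cases hb : b.1 ≤ j.1
      · rw [glue_le x j g.1 h.1 a ha, glue_le x j g.1 h.1 b hb]
        exact g.2.1 (Fin.le_def.mpr (show a.1 ≤ b.1 from hab'))
      · rw [glue_le x j g.1 h.1 a ha, glue_gt x j g.1 h.1 b hb]
        have h1 : g.1 ⟨a.1, by omega⟩ ≤ x 1 := (g.2.2 ⟨a.1, by omega⟩).2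
        have h2 : 1 ≤ h.1 ⟨b.1 - (j.1 + 1), by have := b.2; omega⟩ :=
          (h.2.2 ⟨b.1 - (j.1 + 1), by have := b.2; omega⟩).1
        omega
      · omega
      · rw [glue_gt x j g.1 h.1 a ha, glue_gt x j g.1 h.1 b hb]
        have hmono := h.2.1 (show (⟨a.1 - (j.1 + 1), by have := a.2; omega⟩ : Fin (n - (j.1 + 1))) ≤
            ⟨b.1 - (j.1 + 1), by have := b.2; omega⟩ from
          Fin.le_def.mpr (show a.1 - (j.1 + 1) ≤ b.1 - (j.1 + 1) by omega))
        exact Nat.add_le_add_right hmono (x 1)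
    · intro k
      by_cases hk : k.1 ≤ j.1
      · rw [glue_le x j g.1 h.1 k hk]
        refine ⟨(g.2.2 _).1, ?_⟩
        have h1 : g.1 ⟨k.1, by omega⟩ ≤ x 1 := (g.2.2 ⟨k.1, by omega⟩).2
        have h2 : x 1 ≤ x (k.1 + 1) := xle x hx 1 (k.1 + 1) le_rfl (by omega)
        omega
      · rw [glue_gt x j g.1 h.1 k hk]
        have hkk : k.1 - (j.1 + 1) < n - (j.1 + 1) := by have := k.2; omega
        have h1 : 1 ≤ h.1 ⟨k.1 - (j.1 + 1), hkk⟩ := (h.2.2 ⟨k.1 - (j.1 + 1), hkk⟩).1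
        have h2 : h.1 ⟨k.1 - (j.1 + 1), hkk⟩ ≤ x (k.1 - (j.1 + 1) + 1 + (j.1 + 1)) - x 1 :=
          (h.2.2 ⟨k.1 - (j.1 + 1), hkk⟩).2
        have h3 : x (k.1 - (j.1 + 1) + 1 + (j.1 + 1)) = x (k.1 + 1) := congrArg x (by omega)
        have h4 : x 1 ≤ x (k.1 + 1) := xle x hx 1 (k.1 + 1) le_rfl (by omega)
        omega
  set Φ : (Σ j : Fin n, Q (x 1) (j.1 + 1) × Mon (shift x (j.1 + 1)) (n - (j.1 + 1))) →
      Mon x n := fun p => ⟨glue x p.1 p.2.1.1 p.2.2.1, hΦprop p.1 p.2.1 p.2.2⟩ with hΦ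
  have hinj : Function.Injective Φ := by
    have hc : ∀ p q : (Σ j : Fin n, Q (x 1) (j.1 + 1) × Mon (shift x (j.1 + 1)) (n - (j.1 + 1))),
        glue x p.1 p.2.1.1 p.2.2.1 = glue x q.1 q.2.1.1 q.2.2.1 → q.1.1 < p.1.1 → False := by
      intro p q hfq hlt
      have hk : q.1.1 + 1 < n := by have := p.1.2; omega
      have pf1 : q.1.1 + 1 < p.1.1 + 1 := by omega
      have pfh : q.1.1 + 1 - (q.1.1 + 1) < n - (q.1.1 + 1) := by omega
      have heval := congrFun hfq ⟨q.1.1 + 1, hk⟩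
      rw [glue_le x p.1 p.2.1.1 p.2.2.1 _ (show q.1.1 + 1 ≤ p.1.1 from hlt),
        glue_gt x q.1 q.2.1.1 q.2.2.1 _ (show ¬ q.1.1 + 1 ≤ q.1.1 by omega)] at heval
      have heval' : p.2.1.1 ⟨q.1.1 + 1, pf1⟩ = q.2.2.1 ⟨q.1.1 + 1 - (q.1.1 + 1), pfh⟩ + x 1 :=
        heval
      have h1 : p.2.1.1 ⟨q.1.1 + 1, pf1⟩ ≤ x 1 := (p.2.1.2.2 ⟨q.1.1 + 1, pf1⟩).2
      have h2 : 1 ≤ q.2.2.1 ⟨q.1.1 + 1 - (q.1.1 + 1), pfh⟩ :=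
        (q.2.2.2.2 ⟨q.1.1 + 1 - (q.1.1 + 1), pfh⟩).1
      omega
    intro p q hpq
    have hfun : glue x p.1 p.2.1.1 p.2.2.1 = glue x q.1 q.2.1.1 q.2.2.1 :=
      congrArg Subtype.val hpq
    have hj : p.1 = q.1 := by
      rcases lt_trichotomy p.1.1 q.1.1 with hlt | heq | hlt
      · exact absurd (hc q p hfun.symm hlt) (fun h => h)
      · exact Fin.ext heq
      · exact absurd (hc p q hfun hlt) (fun h => h)
    obtain ⟨j, g, h⟩ := p
    obtain ⟨j', g', h'⟩ := q
    have hjj : j = j' := hj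
    subst hjj
    have hfun' : glue x j g.1 h.1 = glue x j g'.1 h'.1 := hfun
    have EG : g = g' := by
      apply Subtype.ext; funext i
      have pfi : i.1 < n := by have := i.2; have := j.2; omega
      have hile : i.1 ≤ j.1 := by have := i.2; omega
      have := congrFun hfun' ⟨i.1, pfi⟩
      rw [glue_le x j g.1 h.1 _ (show i.1 ≤ j.1 from hile),
        glue_le x j g'.1 h'.1 _ (show i.1 ≤ j.1 from hile)] at this
      have clean : g.1 ⟨i.1, i.2⟩ = g'.1 ⟨i.1, i.2⟩ := this
      simpa using clean
    have EH : h = h' := by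
      apply Subtype.ext; funext i
      have hin : i.1 + (j.1 + 1) < n := by have := i.2; omega
      have pfA : i.1 + (j.1 + 1) - (j.1 + 1) < n - (j.1 + 1) := by have := i.2; omega
      have := congrFun hfun' ⟨i.1 + (j.1 + 1), hin⟩
      rw [glue_gt x j g.1 h.1 _ (show ¬ i.1 + (j.1 + 1) ≤ j.1 by omega),
        glue_gt x j g'.1 h'.1 _ (show ¬ i.1 + (j.1 + 1) ≤ j.1 by omega)] at this
      have clean : h.1 ⟨i.1 + (j.1 + 1) - (j.1 + 1), pfA⟩ + x 1 =
          h'.1 ⟨i.1 + (j.1 + 1) - (j.1 + 1), pfA⟩ + x 1 := this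
      have hidx : (⟨i.1 + (j.1 + 1) - (j.1 + 1), pfA⟩ : Fin (n - (j.1 + 1))) = i :=
        Fin.ext (show i.1 + (j.1 + 1) - (j.1 + 1) = i.1 by omega)
      rw [hidx] at clean
      exact Nat.add_right_cancel clean
    rw [EG, EH]
  have hsurj : Function.Surjective Φ := by
    rintro ⟨f, hmono, hb⟩
    obtain ⟨m, hm1, hmn, claim⟩ : ∃ m, 1 ≤ m ∧ m ≤ n ∧ ∀ k : Fin n, f k ≤ x 1 ↔ k.1 < m := by
      refine ⟨(Finset.univ.filter (fun k : Fin n => f k ≤ x 1)).card, ?_, ?_, ?_⟩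
      · apply Finset.card_pos.mpr
        refine ⟨⟨0, by omega⟩, ?_⟩
        simp only [Finset.mem_filter, Finset.mem_univ, true_and]
        exact (hb ⟨0, by omega⟩).2
      · exact le_trans (Finset.card_le_card (Finset.subset_univ _)) (by simp)
      · intro k
        constructor
        · intro hfk
          have hsub : Finset.univ.filter (fun i : Fin n => i.1 < k.1 + 1) ⊆
              Finset.univ.filter (fun k : Fin n => f k ≤ x 1) := by
            intro l hl
            simp only [Finset.mem_filter, Finset.mem_univ, true_and] at hl ⊢
            exact le_trans (hmono (Fin.le_def.mpr (by omega))) hfk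
          have := Finset.card_le_card hsub
          rw [card_filter_val_lt n (k.1 + 1) (by have := k.2; omega)] at this
          omega
        · intro hkm
          by_contra hfk
          have hsub : Finset.univ.filter (fun k : Fin n => f k ≤ x 1) ⊆
              Finset.univ.filter (fun i : Fin n => i.1 < k.1) := by
            intro l hl
            simp only [Finset.mem_filter, Finset.mem_univ, true_and] at hl ⊢
            by_contra hlk
            exact hfk (le_trans (hmono (Fin.le_def.mpr (by omega))) hl)
          have := Finset.card_le_card hsub
          rw [card_filter_val_lt n k.1 (by have := k.2; omega)] at this
          omega
    have hmn' : m - 1 < n := by omega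
    have hidx1 : ∀ i : Fin (m - 1 + 1), i.1 < n := fun i => by have := i.2; omega
    have hidx2 : ∀ i : Fin (n - (m - 1 + 1)), i.1 + (m - 1 + 1) < n := fun i => by
      have := i.2; omega
    refine ⟨⟨⟨m - 1, hmn'⟩, ⟨fun i => f ⟨i.1, hidx1 i⟩, ?_, ?_⟩,
      ⟨fun i => f ⟨i.1 + (m - 1 + 1), hidx2 i⟩ - x 1, ?_, ?_⟩⟩, ?_⟩
    · intro a b hab
      exact hmono (Fin.le_def.mpr (show a.1 ≤ b.1 from hab))
    · intro i
      refine ⟨(hb _).1, (claim _).mpr ?_⟩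
      show i.1 < m
      have h2 : i.1 < m - 1 + 1 := i.2
      omega
    · intro a b hab
      have hab' : a.1 ≤ b.1 := hab
      exact Nat.sub_le_sub_right
        (hmono (Fin.le_def.mpr (show a.1 + (m - 1 + 1) ≤ b.1 + (m - 1 + 1) by omega))) _
    · intro i
      have hgt : ¬ f ⟨i.1 + (m - 1 + 1), hidx2 i⟩ ≤ x 1 := by
        intro hle
        have h2 := (claim ⟨i.1 + (m - 1 + 1), hidx2 i⟩).mp hle
        have h3 : i.1 + (m - 1 + 1) < m := h2
        omega
      constructor
      · show 1 ≤ f ⟨i.1 + (m - 1 + 1), hidx2 i⟩ - x 1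
        omega
      · show f ⟨i.1 + (m - 1 + 1), hidx2 i⟩ - x 1 ≤ x (i.1 + 1 + (m - 1 + 1)) - x 1
        apply Nat.sub_le_sub_right
        have hfb : f ⟨i.1 + (m - 1 + 1), hidx2 i⟩ ≤ x (i.1 + (m - 1 + 1) + 1) :=
          (hb ⟨i.1 + (m - 1 + 1), hidx2 i⟩).2
        have hxx : x (i.1 + (m - 1 + 1) + 1) = x (i.1 + 1 + (m - 1 + 1)) := congrArg x (by omega)
        omega
    · apply Subtype.ext
      show glue x ⟨m - 1, hmn'⟩ (fun i => f ⟨i.1, hidx1 i⟩)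
        (fun i => f ⟨i.1 + (m - 1 + 1), hidx2 i⟩ - x 1) = f
      funext k
      by_cases hk : k.1 ≤ m - 1
      · rw [glue_le x ⟨m - 1, hmn'⟩ _ _ k hk]
      · rw [glue_gt x ⟨m - 1, hmn'⟩ _ _ k hk]
        have hkk : k.1 - (m - 1 + 1) < n - (m - 1 + 1) := by have := k.2; omega
        show f ⟨k.1 - (m - 1 + 1) + (m - 1 + 1), hidx2 ⟨k.1 - (m - 1 + 1), hkk⟩⟩ - x 1 + x 1 = f k
        have h1 : ¬ f k ≤ x 1 := by
          intro hle
          have h2 : k.1 < m := (claim k).mp hle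
          omega
        have h2 : f ⟨k.1 - (m - 1 + 1) + (m - 1 + 1), hidx2 ⟨k.1 - (m - 1 + 1), hkk⟩⟩ = f k :=
          congrArg f (Fin.ext (show k.1 - (m - 1 + 1) + (m - 1 + 1) = k.1 by omega))
        omega
  have key : Nat.card (Mon x n) =
      Nat.card (Σ j : Fin n, Q (x 1) (j.1 + 1) × Mon (shift x (j.1 + 1)) (n - (j.1 + 1))) :=
    (Nat.card_eq_of_bijective Φ ⟨hinj, hsurj⟩).symm
  rw [key]
  letI iQ : ∀ j : Fin n, Fintype (Q (x 1) (j.1 + 1)) := fun j => Fintype.ofFinite _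
  letI iM : ∀ j : Fin n, Fintype (Mon (shift x (j.1 + 1)) (n - (j.1 + 1))) :=
    fun j => Fintype.ofFinite _
  rw [Nat.card_eq_fintype_card, Fintype.card_sigma]
  refine Finset.sum_congr rfl (fun j _ => ?_)
  rw [Fintype.card_prod, ← Nat.card_eq_fintype_card, ← Nat.card_eq_fintype_card, card_Q]

def E (x : ℕ → ℕ) (n : ℕ) : ℕ :=
  ∑ c : Composition n, ∏ i : Fin c.length,
    (c.blocksFun i + Upsilon x c i - 1).choose (c.blocksFun i)

lemma comp_zero_length (c : Composition 0) : c.length = 0 := by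
  rcases hl : c.blocks with _ | ⟨a, l⟩
  · simp [Composition.length, hl]
  · have ha : 0 < a := c.blocks_pos (by rw [hl]; exact List.mem_cons_self)
    have hs := c.blocks_sum
    rw [hl] at hs
    simp only [List.sum_cons] at hs
    omega

lemma E_zero (x : ℕ → ℕ) : E x 0 = 1 := by
  rw [E]
  have h1 : ∀ c : Composition 0, (∏ i : Fin c.length,
      (c.blocksFun i + Upsilon x c i - 1).choose (c.blocksFun i)) = 1 := by
    intro c
    haveI : IsEmpty (Fin c.length) := by rw [comp_zero_length c]; exact Fin.isEmpty
    rw [Finset.univ_eq_empty, Finset.prod_empty]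
  rw [Finset.sum_congr rfl (fun c _ => h1 c), Finset.sum_const, smul_eq_mul, mul_one,
    Finset.card_univ, composition_card]
  norm_num

lemma Mon_zero (x : ℕ → ℕ) : Nat.card (Mon x 0) = 1 := by
  haveI : Unique (Mon x 0) :=
    { default := ⟨fun i => i.elim0, by intro a; exact a.elim0, fun i => i.elim0⟩
      uniq := fun a => Subtype.ext (funext fun i => i.elim0) }
  exact Nat.card_unique

def consComp {n : ℕ} (j : Fin n) (c : Composition (n - (j.1 + 1))) : Composition n :=
  ⟨(j.1 + 1) :: c.blocks, by
    intro i hi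
    rcases List.mem_cons.mp hi with h | h
    · omega
    · exact c.blocks_pos h, by
    simp only [List.sum_cons, c.blocks_sum]
    have := j.2
    omega⟩

lemma consComp_sizeUpTo {n : ℕ} (j : Fin n) (c : Composition (n - (j.1 + 1))) (k : ℕ) :
    (consComp j c).sizeUpTo (k + 1) = (j.1 + 1) + c.sizeUpTo k := by
  simp [Composition.sizeUpTo, consComp]

lemma consComp_sizeUpTo_zero {n : ℕ} (j : Fin n) (c : Composition (n - (j.1 + 1))) :
    (consComp j c).sizeUpTo 0 = 0 := by
  simp [Composition.sizeUpTo]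

lemma Upsilon_cons (x : ℕ → ℕ) (hx : ∀ m, 1 ≤ m → x m ≤ x (m + 1)) {n : ℕ} (j : Fin n)
    (c : Composition (n - (j.1 + 1))) (i : Fin c.length) :
    Upsilon x (consComp j c) (⟨i.1 + 1, Nat.succ_lt_succ i.2⟩ : Fin (c.length + 1)) =
      Upsilon (shift x (j.1 + 1)) c i := by
  have hne : ¬ ((⟨i.1 + 1, Nat.succ_lt_succ i.2⟩ : Fin (c.length + 1)).val = 0) :=
    Nat.succ_ne_zero i.1
  rcases Nat.eq_zero_or_pos i.1 with h0 | hpos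
  · unfold Upsilon; rw [if_neg hne, if_pos h0]
    have e1 : (consComp j c).sizeUpTo (⟨i.1 + 1, Nat.succ_lt_succ i.2⟩ : Fin (c.length + 1)).1 =
        (j.1 + 1) + c.sizeUpTo i.1 := consComp_sizeUpTo j c i.1
    have e2 : c.sizeUpTo i.1 = 0 := by rw [h0]; exact c.sizeUpTo_zero
    have e3 : ((⟨i.1 + 1, Nat.succ_lt_succ i.2⟩ : Fin (c.length + 1)).1 - 1) = i.1 := by
      simp only; omega
    rw [e3]
    have e4 : (consComp j c).sizeUpTo i.1 = 0 := by rw [h0]; exact consComp_sizeUpTo_zero j c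
    rw [e1, e2, e4]
    show x (1 + (j.1 + 1 + 0)) - x (1 + 0) = x (1 + (j.1 + 1)) - x 1
    have : (1 : ℕ) + (j.1 + 1 + 0) = 1 + (j.1 + 1) := by omega
    rw [this]
  · obtain ⟨t, ht⟩ : ∃ t, i.1 = t + 1 := ⟨i.1 - 1, by omega⟩
    unfold Upsilon; rw [if_neg hne, if_neg (by omega)]
    have e3 : ((⟨i.1 + 1, Nat.succ_lt_succ i.2⟩ : Fin (c.length + 1)).1 - 1) = t + 1 := by
      simp only; omega
    have e5 : (⟨i.1 + 1, Nat.succ_lt_succ i.2⟩ : Fin (c.length + 1)).1 = (t + 1) + 1 := by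
      simp only; omega
    rw [e3, e5, consComp_sizeUpTo j c (t + 1), consComp_sizeUpTo j c t]
    have e6 : i.1 - 1 = t := by omega
    rw [e6, ht]
    show x (1 + (j.1 + 1 + c.sizeUpTo (t + 1))) - x (1 + (j.1 + 1 + c.sizeUpTo t)) =
      (x (1 + c.sizeUpTo (t + 1) + (j.1 + 1)) - x 1) - (x (1 + c.sizeUpTo t + (j.1 + 1)) - x 1)
    have ea : x (1 + (j.1 + 1 + c.sizeUpTo (t + 1))) = x (1 + c.sizeUpTo (t + 1) + (j.1 + 1)) :=
      congrArg x (by omega)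
    have eb : x (1 + (j.1 + 1 + c.sizeUpTo t)) = x (1 + c.sizeUpTo t + (j.1 + 1)) :=
      congrArg x (by omega)
    have hc : x 1 ≤ x (1 + c.sizeUpTo t + (j.1 + 1)) :=
      xle x hx 1 (1 + c.sizeUpTo t + (j.1 + 1)) le_rfl (by omega)
    omega

lemma E_rec (x : ℕ → ℕ) (hx : ∀ m, 1 ≤ m → x m ≤ x (m + 1)) (n : ℕ) (hn : 1 ≤ n) :
    E x n = ∑ j : Fin n,
      Nat.multichoose (x 1) (j.1 + 1) * E (shift x (j.1 + 1)) (n - (j.1 + 1)) := by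
  classical
  have hbij : Function.Bijective
      (fun p : Σ j : Fin n, Composition (n - (j.1 + 1)) => consComp p.1 p.2) := by
    constructor
    · rintro ⟨j, c⟩ ⟨j', c'⟩ hpq
      have hbl : (j.1 + 1) :: c.blocks = (j'.1 + 1) :: c'.blocks :=
        congrArg Composition.blocks hpq
      have hj : j = j' := Fin.ext (by injection hbl with h1 _; omega)
      subst hj
      have hc : c.blocks = c'.blocks := by injection hbl
      have : c = c' := by
        cases c; cases c'
        simpa using hc
      rw [this]
    · intro c
      rcases hl : c.blocks with _ | ⟨b, l⟩
      · exfalso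
        have hs := c.blocks_sum
        rw [hl] at hs
        simp at hs
        omega
      · have hb : 0 < b := c.blocks_pos (by rw [hl]; exact List.mem_cons_self)
        have hs := c.blocks_sum
        rw [hl] at hs
        simp only [List.sum_cons] at hs
        have hbn : b ≤ n := by omega
        refine ⟨⟨⟨b - 1, by omega⟩, ⟨l, ?_, ?_⟩⟩, ?_⟩
        · intro i hi
          exact c.blocks_pos (by rw [hl]; exact List.mem_cons_of_mem _ hi)
        · show l.sum = n - (b - 1 + 1)
          omega
        · show consComp _ _ = c
          obtain ⟨bl, hpos, hsum⟩ := c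
          change bl = b :: l at hl
          subst hl
          simp only [consComp, Composition.mk.injEq]
          show (b - 1 + 1) :: l = b :: l
          rw [show b - 1 + 1 = b from by omega]
  have hcompat : ∀ p : Σ j : Fin n, Composition (n - (j.1 + 1)),
      (fun p : Σ j : Fin n, Composition (n - (j.1 + 1)) =>
        Nat.multichoose (x 1) (p.1.1 + 1) * ∏ i : Fin p.2.length,
          (p.2.blocksFun i + Upsilon (shift x (p.1.1 + 1)) p.2 i - 1).choose (p.2.blocksFun i)) p =
      (fun c : Composition n => ∏ i : Fin c.length,
        (c.blocksFun i + Upsilon x c i - 1).choose (c.blocksFun i)) (consComp p.1 p.2) := by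
    rintro ⟨j, c⟩
    show Nat.multichoose (x 1) (j.1 + 1) * ∏ i : Fin c.length,
        (c.blocksFun i + Upsilon (shift x (j.1 + 1)) c i - 1).choose (c.blocksFun i) =
      ∏ i : Fin (c.length + 1), ((consComp j c).blocksFun i + Upsilon x (consComp j c) i - 1).choose
        ((consComp j c).blocksFun i)
    rw [Fin.prod_univ_succ]
    have hb0 : (consComp j c).blocksFun (0 : Fin (c.length + 1)) = j.1 + 1 := by
      simp [Composition.blocksFun, consComp]
    have hU0 : Upsilon x (consComp j c) (0 : Fin (c.length + 1)) = x 1 := by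
      unfold Upsilon; rw [if_pos (by simp)]
    congr 1
    · rw [hb0, hU0, Nat.multichoose_eq]
      congr 1
      omega
    · apply Finset.prod_congr rfl
      intro i _
      have hbs : (consComp j c).blocksFun (Fin.succ i) = c.blocksFun i := by
        simp [Composition.blocksFun, consComp]
      have hUs : Upsilon x (consComp j c) (Fin.succ i) = Upsilon (shift x (j.1 + 1)) c i :=
        Upsilon_cons x hx j c i
      rw [hbs, hUs]
  have key := Fintype.sum_bijective
    (fun p : Σ j : Fin n, Composition (n - (j.1 + 1)) => consComp p.1 p.2) hbij
    (fun p : Σ j : Fin n, Composition (n - (j.1 + 1)) =>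
      Nat.multichoose (x 1) (p.1.1 + 1) * ∏ i : Fin p.2.length,
        (p.2.blocksFun i + Upsilon (shift x (p.1.1 + 1)) p.2 i - 1).choose (p.2.blocksFun i))
    (fun c : Composition n => ∏ i : Fin c.length,
      (c.blocksFun i + Upsilon x c i - 1).choose (c.blocksFun i))
    hcompat
  rw [E, ← key, ← Finset.univ_sigma_univ, Finset.sum_sigma]
  refine Finset.sum_congr rfl (fun j _ => ?_)
  rw [E, Finset.mul_sum]

lemma main (n : ℕ) : ∀ x : ℕ → ℕ, (∀ m, 1 ≤ m → x m ≤ x (m + 1)) →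
    Nat.card (Mon x n) = E x n := by
  induction n using Nat.strong_induction_on with
  | _ n IH =>
    intro x hx
    rcases Nat.eq_zero_or_pos n with rfl | hn
    · rw [Mon_zero, E_zero]
    · rw [Mon_rec x hx n hn, E_rec x hx n hn]
      refine Finset.sum_congr rfl (fun j _ => ?_)
      rw [IH (n - (j.1 + 1)) (by have := j.2; omega) _ (shift_hx x hx (j.1 + 1))]

end PFAux

theorem pf_types_closed_formula (x : ℕ → ℕ) (hx : ∀ m, 1 ≤ m → x m ≤ x (m + 1))
    (n : ℕ) (hn : 1 ≤ n) :
    T x n = ∑ c : Composition n,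
      ∏ i : Fin c.length,
        (c.blocksFun i + Upsilon x c i - 1).choose (c.blocksFun i) := by
  rw [PFAux.T_eq, PFAux.main n x hx]
  rfl
end

section
/- For every non-decreasing sequence x : ℕ → ℕ (indexed from 1) and every n ≥ 1, the following alternating-sum identity holds in ℤ: PF(x; n) = Σ_{π composition of n} (−1)^{n − ℓ(π)} · (n! / (π_1! ⋯ π_{ℓ(π)}!)) · ∏_{i=1}^{ℓ(π)} x(1 + π(i−1))^{π_i}, where π(i) denotes the i-th partial sum of π with π(0) = 0. -/
open Finset

namespace PFIE

/-- The shifted sequence. -/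
def shift (x : ℕ → ℕ) (j : ℕ) : ℕ → ℕ := fun m => x (m + j)

lemma shift_zero (x : ℕ → ℕ) : shift x 0 = x := rfl

lemma mono_of {x : ℕ → ℕ} (hx : ∀ m, 1 ≤ m → x m ≤ x (m + 1)) :
    ∀ {a b : ℕ}, 1 ≤ a → a ≤ b → x a ≤ x b := by
  intro a b ha hab
  induction b, hab using Nat.le_induction with
  | base => exact le_refl _
  | succ b hb ih => exact ih.trans (hx b (ha.trans hb))

lemma shift_hx {x : ℕ → ℕ} (hx : ∀ m, 1 ≤ m → x m ≤ x (m + 1)) (j : ℕ) :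
    ∀ m, 1 ≤ m → shift x j m ≤ shift x j (m + 1) := by
  intro m hm
  exact mono_of hx (by omega) (by omega)

lemma filter_eq_univ_of_card_le {α : Type} [Fintype α] {p : α → Prop} [DecidablePred p]
    (h : Fintype.card α ≤ (univ.filter p).card) : ∀ i, p i := by
  intro i
  have h2 : (univ.filter p) = univ := by
    apply Finset.eq_univ_of_card
    exact le_antisymm (by simpa using Finset.card_filter_le univ p) (by simpa using h)
  have : i ∈ univ.filter p := by rw [h2]; exact mem_univ i
  exact (mem_filter.mp this).2

open Classical in
/-- Parking functions on an arbitrary finite index type, as a finset. -/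
noncomputable def parkF (y : ℕ → ℕ) (α : Type) [Fintype α] : Finset (α → ℕ) :=
  (Fintype.piFinset fun _ => Finset.Icc 1 (y (Fintype.card α))).filter
    fun f => (∀ i, 1 ≤ f i) ∧
      ∀ k, 1 ≤ k → k ≤ Fintype.card α → k ≤ (univ.filter fun i => f i ≤ y k).card

lemma mem_parkF {y : ℕ → ℕ} {α : Type} [Fintype α] {f : α → ℕ} :
    f ∈ parkF y α ↔ (∀ i, 1 ≤ f i) ∧
      ∀ k, 1 ≤ k → k ≤ Fintype.card α →
        k ≤ (univ.filter fun i => f i ≤ y k).card := by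
  classical
  simp only [parkF, Finset.mem_filter, Fintype.mem_piFinset, Finset.mem_Icc]
  constructor
  · intro hf
    exact hf.2
  · intro hf
    refine ⟨fun i => ?_, hf⟩
    rcases Nat.eq_zero_or_pos (Fintype.card α) with h0 | h0
    · have : 0 < Fintype.card α := Fintype.card_pos_iff.mpr ⟨i⟩
      omega
    · have := filter_eq_univ_of_card_le (p := fun i => f i ≤ y (Fintype.card α))
        (hf.2 (Fintype.card α) h0 le_rfl)
      exact ⟨hf.1 i, this i⟩

end PFIE

namespace PFIE

lemma card_filter_equiv {α β : Type} [Fintype α] [Fintype β] (e : α ≃ β) (p : β → Prop)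
    [DecidablePred p] :
    (univ.filter fun a : α => p (e a)).card = (univ.filter p).card := by
  apply Finset.card_bij (fun a _ => e a)
  · intro a ha
    simp only [mem_filter, mem_univ, true_and] at ha ⊢
    exact ha
  · intro a _ b _ h
    exact e.injective h
  · intro b hb
    simp only [mem_filter, mem_univ, true_and] at hb ⊢
    exact ⟨e.symm b, by simpa using hb, by simp⟩

lemma card_filter_subtype {α : Type} [Fintype α] [DecidableEq α] (t : Finset α) (p : α → Prop)
    [DecidablePred p] :
    ((univ : Finset {i // i ∈ t}).filter fun i => p i.1).card = (t.filter p).card := by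
  apply Finset.card_bij (fun (i : {i // i ∈ t}) _ => i.1)
  · intro a ha
    simp only [mem_filter, mem_univ, true_and] at ha ⊢
    exact ⟨a.2, ha⟩
  · intro a _ b _ h
    exact Subtype.ext h
  · intro b hb
    simp only [mem_filter, mem_univ, true_and] at hb
    exact ⟨⟨b, hb.1⟩, by simp [hb.2], rfl⟩

lemma parkF_card_congr {y : ℕ → ℕ} {α β : Type} [Fintype α] [Fintype β] (e : α ≃ β) :
    (parkF y α).card = (parkF y β).card := by
  classical
  apply Finset.card_bij' (fun f _ => f ∘ ⇑e.symm) (fun g _ => g ∘ ⇑e)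
  · intro f hf
    rw [mem_parkF] at hf ⊢
    rw [← Fintype.card_congr e]
    refine ⟨fun i => hf.1 _, fun k hk1 hk2 => ?_⟩
    have := hf.2 k hk1 hk2
    calc k ≤ (univ.filter fun i : α => f i ≤ y k).card := this
    _ = (univ.filter fun b : β => f (e.symm b) ≤ y k).card :=
        (card_filter_equiv e.symm (fun i : α => f i ≤ y k)).symm
  · intro g hg
    rw [mem_parkF] at hg ⊢
    rw [Fintype.card_congr e]
    refine ⟨fun i => hg.1 _, fun k hk1 hk2 => ?_⟩
    have := hg.2 k hk1 hk2
    calc k ≤ (univ.filter fun i : β => g i ≤ y k).card := this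
    _ = (univ.filter fun a : α => g (e a) ≤ y k).card := by
        rw [card_filter_equiv e (fun i : β => g i ≤ y k)]
  · intro f _; funext i; simp
  · intro g _; funext i; simp

lemma PF_zero (x : ℕ → ℕ) : PF x 0 = 1 := by
  have hall : ∀ f : Fin 0 → ℕ, IsPF x f :=
    fun f => ⟨fun i => i.elim0, fun k hk hk' => by omega⟩
  rw [PF]
  haveI : Unique {f : Fin 0 → ℕ // IsPF x f} :=
    ⟨⟨⟨fun i => i.elim0, hall _⟩⟩, by
      rintro ⟨f, hf⟩
      exact Subtype.ext (funext fun i => i.elim0)⟩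
  simp

lemma parkF_fin_card (y : ℕ → ℕ) (n : ℕ) : (parkF y (Fin n)).card = PF y n := by
  classical
  rcases Nat.eq_zero_or_pos n with rfl | hn
  · rw [PF_zero]
    have : parkF y (Fin 0) = {fun i : Fin 0 => i.elim0} := by
      ext f
      simp only [mem_parkF, mem_singleton]
      constructor
      · intro _; exact funext fun i => i.elim0
      · intro _
        exact ⟨fun i => i.elim0, fun k hk1 hk2 => by simp at hk2; omega⟩
    rw [this, card_singleton]
  · have hmem : ∀ f : Fin n → ℕ, IsPF y f ↔ f ∈ parkF y (Fin n) := by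
      intro f
      rw [mem_parkF, IsPF]
      simp [Fintype.card_fin]
    rw [PF, Nat.card_congr (Equiv.subtypeEquivRight hmem)]
    rw [Nat.card_eq_finsetCard]

lemma parkF_card (y : ℕ → ℕ) (α : Type) [Fintype α] :
    (parkF y α).card = PF y (Fintype.card α) := by
  rw [parkF_card_congr (Fintype.equivFin α), parkF_fin_card]

end PFIE

namespace PFIE

/-- The predicate in the signed count. -/
def Q (x : ℕ → ℕ) {n : ℕ} (S : Finset (Fin n)) (g : Fin n → ℕ) : Prop :=
  (∀ i ∈ S, g i ≤ x 1) ∧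
  ∀ k, 1 ≤ k → k ≤ n - S.card → k ≤ ((Sᶜ).filter fun i => g i ≤ x (k + S.card)).card

open Classical in
lemma countQ {x : ℕ → ℕ} (hx : ∀ m, 1 ≤ m → x m ≤ x (m + 1)) {n : ℕ} (hn : 1 ≤ n)
    (S : Finset (Fin n)) :
    ((Fintype.piFinset fun _ : Fin n => Icc 1 (x n)).filter fun g => Q x S g).card
      = x 1 ^ S.card * PF (shift x S.card) (n - S.card) := by
  classical
  have hjn : S.card ≤ n := by simpa using S.card_le_univ
  have hcard2 : Fintype.card {i // i ∈ Sᶜ} = n - S.card := by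
    rw [Fintype.card_coe, card_compl, Fintype.card_fin]
  have hshift : ∀ k, shift x S.card k = x (k + S.card) := fun k => rfl
  have key : ((Fintype.piFinset fun _ : Fin n => Icc 1 (x n)).filter fun g => Q x S g).card
      = ((Fintype.piFinset fun _ : {i // i ∈ S} => Icc 1 (x 1)) ×ˢ
          parkF (shift x S.card) {i // i ∈ Sᶜ}).card := by
    refine Finset.card_bij'
      (fun g _ => (fun i : {i // i ∈ S} => g i.1, fun i : {i // i ∈ Sᶜ} => g i.1))
      (fun p _ => fun i : Fin n =>
        if h : i ∈ S then p.1 ⟨i, h⟩ else p.2 ⟨i, by simp [h]⟩) ?hi ?hj ?left ?right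
    case hi =>
      intro g hg
      rw [mem_filter] at hg
      obtain ⟨hgpi, hgQ⟩ := hg
      rw [Fintype.mem_piFinset] at hgpi
      rw [mem_product]
      constructor
      · rw [Fintype.mem_piFinset]
        intro i
        rw [mem_Icc]
        have := hgpi i.1
        rw [mem_Icc] at this
        exact ⟨this.1, hgQ.1 i.1 i.2⟩
      · rw [mem_parkF]
        refine ⟨fun i => ?_, fun k hk1 hk2 => ?_⟩
        · have := hgpi i.1; rw [mem_Icc] at this; exact this.1
        · rw [hcard2] at hk2
          calc k ≤ ((Sᶜ).filter fun i => g i ≤ x (k + S.card)).card := hgQ.2 k hk1 hk2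
          _ = _ := (card_filter_subtype (Sᶜ) (fun i => g i ≤ x (k + S.card))).symm
    case hj =>
      intro p hp
      rw [mem_product] at hp
      obtain ⟨hp1, hp2⟩ := hp
      rw [Fintype.mem_piFinset] at hp1
      have hp2' := mem_parkF.mp hp2
      -- upper bound for the second component
      have hub : ∀ i : {i // i ∈ Sᶜ}, p.2 i ≤ x n := by
        intro i
        have hpos : 0 < Fintype.card {i // i ∈ Sᶜ} := Fintype.card_pos_iff.mpr ⟨i⟩
        have := filter_eq_univ_of_card_le
          (p := fun i : {i // i ∈ Sᶜ} => p.2 i ≤ shift x S.card (Fintype.card {i // i ∈ Sᶜ}))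
          (hp2'.2 (Fintype.card {i // i ∈ Sᶜ}) hpos le_rfl) i
        rw [hshift, hcard2] at this
        rwa [Nat.sub_add_cancel hjn] at this
      rw [mem_filter]
      constructor
      · rw [Fintype.mem_piFinset]
        intro i
        rw [mem_Icc]
        by_cases h : i ∈ S
        · rw [dif_pos h]
          have := hp1 ⟨i, h⟩
          rw [mem_Icc] at this
          exact ⟨this.1, this.2.trans (mono_of hx le_rfl hn)⟩
        · rw [dif_neg h]
          exact ⟨hp2'.1 _, hub _⟩
      · constructor
        · intro i hi
          simp only [dif_pos hi]
          have := hp1 ⟨i, hi⟩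
          rw [mem_Icc] at this
          exact this.2
        · intro k hk1 hk2
          have heq : ((Sᶜ).filter fun i =>
              (if h : i ∈ S then p.1 ⟨i, h⟩ else p.2 ⟨i, by simp [h]⟩) ≤ x (k + S.card)).card
              = ((univ : Finset {i // i ∈ Sᶜ}).filter fun i => p.2 i ≤ x (k + S.card)).card := by
            rw [← card_filter_subtype (Sᶜ)
              (fun i => (if h : i ∈ S then p.1 ⟨i, h⟩ else p.2 ⟨i, by simp [h]⟩) ≤ x (k + S.card))]
            congr 1
            ext i
            simp only [mem_filter, mem_univ, true_and]
            have hiS : i.1 ∉ S := by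
              have := i.2; rw [mem_compl] at this; exact this
            rw [dif_neg hiS]
          rw [heq]
          have := hp2'.2 k hk1 (by rw [hcard2]; exact hk2)
          rwa [hshift] at this
    case left =>
      intro g _
      funext i
      by_cases h : i ∈ S <;> simp [h]
    case right =>
      intro p _
      obtain ⟨u, v⟩ := p
      simp only [Prod.mk.injEq]
      constructor
      · funext i
        rw [dif_pos i.2]
      · funext i
        have hiS : i.1 ∉ S := by have := i.2; rwa [mem_compl] at this
        rw [dif_neg hiS]
  rw [key, Finset.card_product, Fintype.card_piFinset]
  congr 1
  · simp [Nat.card_Icc]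
  · rw [parkF_card, hcard2]

end PFIE

namespace PFIE

lemma Qerase {x : ℕ → ℕ} (hx : ∀ m, 1 ≤ m → x m ≤ x (m + 1)) {n : ℕ}
    {S : Finset (Fin n)} {g : Fin n → ℕ} {i0 : Fin n}
    (hQ : Q x S g) (hi : i0 ∈ S) (hg : g i0 ≤ x 1) : Q x (S.erase i0) g := by
  classical
  have hjn : S.card ≤ n := by simpa using S.card_le_univ
  have hj1 : 1 ≤ S.card := Finset.card_pos.mpr ⟨i0, hi⟩
  have hce : (S.erase i0).card = S.card - 1 := Finset.card_erase_of_mem hi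
  constructor
  · intro i hmem
    exact hQ.1 i (Finset.mem_of_mem_erase hmem)
  · intro k hk1 hk2
    rw [hce] at hk2 ⊢
    have hcompl : (S.erase i0)ᶜ = insert i0 Sᶜ := Finset.compl_erase
    rw [hcompl]
    have hpi0 : g i0 ≤ x (k + (S.card - 1)) := hg.trans (mono_of hx le_rfl (by omega))
    rw [Finset.filter_insert, if_pos hpi0]
    have hnotmem : i0 ∉ (Sᶜ).filter fun i => g i ≤ x (k + (S.card - 1)) := by
      intro hmem
      exact (Finset.mem_compl.mp (Finset.mem_filter.mp hmem).1) hi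
    rw [Finset.card_insert_of_notMem hnotmem]
    rcases Nat.eq_or_lt_of_le hk1 with h1 | h2
    · omega
    · have hk2' : k - 1 ≤ n - S.card := by omega
      have := hQ.2 (k - 1) (by omega) hk2'
      have hidx : k - 1 + S.card = k + (S.card - 1) := by omega
      rw [hidx] at this
      omega

lemma Qinsert {x : ℕ → ℕ} {n : ℕ}
    {S : Finset (Fin n)} {g : Fin n → ℕ} {i0 : Fin n}
    (hQ : Q x S g) (hi : i0 ∉ S) (hg : g i0 ≤ x 1) : Q x (insert i0 S) g := by
  classical
  have hci : (insert i0 S).card = S.card + 1 := Finset.card_insert_of_notMem hi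
  constructor
  · intro i hmem
    rcases Finset.mem_insert.mp hmem with rfl | hmem
    · exact hg
    · exact hQ.1 i hmem
  · intro k hk1 hk2
    rw [hci] at hk2 ⊢
    have hcompl : (insert i0 S)ᶜ = (Sᶜ).erase i0 := Finset.compl_insert
    rw [hcompl, Finset.filter_erase]
    have hcard : ((Sᶜ).filter fun i => g i ≤ x (k + (S.card + 1))).card - 1 ≤
        (((Sᶜ).filter fun i => g i ≤ x (k + (S.card + 1))).erase i0).card := by
      rcases em (i0 ∈ (Sᶜ).filter fun i => g i ≤ x (k + (S.card + 1))) with h | h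
      · rw [Finset.card_erase_of_mem h]
      · rw [Finset.erase_eq_of_notMem h]
        omega
    have := hQ.2 (k + 1) (by omega) (by omega)
    have hidx : k + 1 + S.card = k + (S.card + 1) := by omega
    rw [hidx] at this
    omega

open Classical in
lemma star {x : ℕ → ℕ} (hx : ∀ m, 1 ≤ m → x m ≤ x (m + 1)) {n : ℕ} (hn : 1 ≤ n) :
    (PF x n : ℤ) = ∑ i ∈ range n,
      (-1 : ℤ) ^ i * (n.choose (i + 1)) * (x 1 : ℤ) ^ (i + 1) *
        PF (shift x (i + 1)) (n - (i + 1)) := by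
  classical
  set pi : Finset (Fin n → ℕ) := Fintype.piFinset fun _ : Fin n => Icc 1 (x n) with hpi
  set T : (Fin n → ℕ) → Finset (Fin n) := fun g => univ.filter fun i => g i ≤ x 1 with hT
  -- nonemptiness of T for Q-pairs
  have hTne : ∀ (S : Finset (Fin n)) (g : Fin n → ℕ), Q x S g → (T g).Nonempty := by
    intro S g hQ
    rcases S.eq_empty_or_nonempty with rfl | ⟨i, hi⟩
    · have := hQ.2 1 le_rfl (by simpa using hn)
      simp only [Finset.card_empty, Nat.add_zero, Finset.compl_empty] at this
      have : (univ.filter fun i => g i ≤ x 1).Nonempty := by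
        rw [← Finset.card_pos]; omega
      exact this
    · refine ⟨i, ?_⟩
      simp only [hT, Finset.mem_filter, Finset.mem_univ, true_and]
      exact hQ.1 i hi
  have hsign : ∀ m : ℕ, 1 ≤ m → (-1 : ℤ) ^ m + (-1 : ℤ) ^ (m - 1) = 0 := by
    intro m hm
    obtain ⟨k, rfl⟩ : ∃ k, m = k + 1 := ⟨m - 1, by omega⟩
    simp [pow_succ]
  -- the involution
  have key : (∑ p ∈ (univ : Finset (Finset (Fin n))) ×ˢ pi,
      if Q x p.1 p.2 then ((-1 : ℤ)) ^ p.1.card else 0) = 0 := by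
    apply Finset.sum_involution
      (g := fun p _ =>
        if hQ : Q x p.1 p.2 then
          (if (T p.2).min' (hTne _ _ hQ) ∈ p.1
            then (p.1.erase ((T p.2).min' (hTne _ _ hQ)), p.2)
            else (insert ((T p.2).min' (hTne _ _ hQ)) p.1, p.2))
        else p)
    · -- sums to zero pairwise
      intro p hp
      by_cases hQ : Q x p.1 p.2
      · rw [dif_pos hQ]
        set i0 := (T p.2).min' (hTne _ _ hQ) with hi0
        have hgT : p.2 i0 ≤ x 1 := by
          have := (T p.2).min'_mem (hTne _ _ hQ)
          exact (Finset.mem_filter.mp this).2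
        by_cases hmem : i0 ∈ p.1
        · rw [if_pos hmem, if_pos hQ]
          dsimp only
          rw [if_pos (Qerase hx hQ hmem hgT), Finset.card_erase_of_mem hmem]
          have h1 : 1 ≤ p.1.card := Finset.card_pos.mpr ⟨i0, hmem⟩
          exact hsign _ h1
        · rw [if_neg hmem, if_pos hQ]
          dsimp only
          rw [if_pos (Qinsert hQ hmem hgT), Finset.card_insert_of_notMem hmem]
          have := hsign (p.1.card + 1) (by omega)
          simpa [add_comm] using this
      · rw [dif_neg hQ, if_neg hQ]
        ring
    · -- nonzero implies changed
      intro p hp hne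
      by_cases hQ : Q x p.1 p.2
      · rw [dif_pos hQ]
        set i0 := (T p.2).min' (hTne _ _ hQ) with hi0
        by_cases hmem : i0 ∈ p.1
        · rw [if_pos hmem]
          intro hcontra
          have : p.1.erase i0 = p.1 := congrArg Prod.fst hcontra
          rw [Finset.erase_eq_self] at this
          exact this hmem
        · rw [if_neg hmem]
          intro hcontra
          have : insert i0 p.1 = p.1 := congrArg Prod.fst hcontra
          rw [Finset.insert_eq_self] at this
          exact hmem this
      · exact absurd (if_neg hQ) hne
    · -- stays in the set
      intro p hp
      by_cases hQ : Q x p.1 p.2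
      · rw [dif_pos hQ]
        rw [Finset.mem_product] at hp ⊢
        by_cases hmem : (T p.2).min' (hTne _ _ hQ) ∈ p.1
        · rw [if_pos hmem]; exact ⟨Finset.mem_univ _, hp.2⟩
        · rw [if_neg hmem]; exact ⟨Finset.mem_univ _, hp.2⟩
      · rw [dif_neg hQ]; exact hp
    · -- involutive
      intro p hp
      by_cases hQ : Q x p.1 p.2
      · rw [dif_pos hQ]
        set i0 := (T p.2).min' (hTne _ _ hQ) with hi0
        have hgT : p.2 i0 ≤ x 1 := by
          have := (T p.2).min'_mem (hTne _ _ hQ)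
          exact (Finset.mem_filter.mp this).2
        by_cases hmem : i0 ∈ p.1
        · rw [if_pos hmem]
          have hQ' : Q x (p.1.erase i0) p.2 := Qerase hx hQ hmem hgT
          dsimp only
          rw [dif_pos hQ']
          rw [if_neg (Finset.notMem_erase i0 p.1)]
          rw [Finset.insert_erase hmem]
        · rw [if_neg hmem]
          have hQ' : Q x (insert i0 p.1) p.2 := Qinsert hQ hmem hgT
          dsimp only
          rw [dif_pos hQ']
          rw [if_pos (Finset.mem_insert_self i0 p.1)]
          rw [Finset.erase_insert hmem]
      · simp only [dif_neg hQ]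
  have hsum : (∑ p ∈ (univ : Finset (Finset (Fin n))) ×ˢ pi,
      if Q x p.1 p.2 then ((-1 : ℤ)) ^ p.1.card else 0)
      = ∑ S : Finset (Fin n),
          (-1 : ℤ) ^ S.card * ((x 1 ^ S.card * PF (shift x S.card) (n - S.card) : ℕ) : ℤ) := by
    rw [Finset.sum_product]
    apply Finset.sum_congr rfl
    intro S _
    rw [← countQ hx hn S]
    calc (∑ g ∈ pi, if Q x S g then ((-1 : ℤ)) ^ S.card else 0)
        = ∑ g ∈ pi.filter fun g => Q x S g, ((-1 : ℤ)) ^ S.card := by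
          rw [Finset.sum_filter]
      _ = (pi.filter fun g => Q x S g).card • ((-1 : ℤ)) ^ S.card := Finset.sum_const _
      _ = _ := by
          rw [nsmul_eq_mul, mul_comm]
  rw [hsum] at key
  rw [← Finset.powerset_univ, Finset.sum_powerset_apply_card
    (fun j => ((-1 : ℤ)) ^ j * ((x 1 ^ j * PF (shift x j) (n - j) : ℕ) : ℤ))] at key
  simp only [Finset.card_univ, Fintype.card_fin] at key
  rw [Finset.sum_range_succ'] at key
  have hzero : (n.choose 0) • (((-1 : ℤ)) ^ 0 *
      ((x 1 ^ 0 * PF (shift x 0) (n - 0) : ℕ) : ℤ)) = (PF x n : ℤ) := by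
    simp [shift_zero]
  rw [hzero] at key
  have hmain : (PF x n : ℤ) = ∑ i ∈ range n,
      -((n.choose (i + 1)) • (((-1 : ℤ)) ^ (i + 1) *
        ((x 1 ^ (i + 1) * PF (shift x (i + 1)) (n - (i + 1)) : ℕ) : ℤ))) := by
    rw [Finset.sum_neg_distrib]
    linarith [key]
  rw [hmain]
  apply Finset.sum_congr rfl
  intro i _
  push_cast [nsmul_eq_mul, pow_succ]
  ring

end PFIE

namespace PFIE

open scoped Nat

noncomputable def Tsum (x : ℕ → ℕ) (n : ℕ) : ℤ :=
  ∑ c : Composition n,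
    (-1 : ℤ) ^ (n - c.length) *
      (Nat.multinomial Finset.univ c.blocksFun : ℤ) *
      ∏ i : Fin c.length, (x (1 + c.sizeUpTo i.val) : ℤ) ^ c.blocksFun i

lemma comp0_blocks (c : Composition 0) : c.blocks = [] := by
  cases h : c.blocks with
  | nil => rfl
  | cons b l =>
    have hb : 0 < b := c.blocks_pos (by rw [h]; exact List.mem_cons_self)
    have hs := c.blocks_sum
    rw [h] at hs
    simp at hs
    omega

lemma Tsum_zero (x : ℕ → ℕ) : Tsum x 0 = 1 := by
  classical
  have huniv : (Finset.univ : Finset (Composition 0))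
      = {(⟨[], by simp, by simp⟩ : Composition 0)} := by
    apply Finset.eq_singleton_iff_unique_mem.mpr
    refine ⟨mem_univ _, fun c _ => ?_⟩
    apply Composition.ext
    rw [comp0_blocks]
  rw [Tsum, huniv, Finset.sum_singleton]
  simp [Nat.multinomial_empty, Composition.length]

lemma multinomial_fin_succ {m : ℕ} (g : Fin (m + 1) → ℕ) :
    Nat.multinomial Finset.univ g
      = (∑ i, g i).choose (g 0) * Nat.multinomial Finset.univ (g ∘ Fin.succ) := by
  have hpos : 0 < ∏ i, (g i)! := Finset.prod_pos fun i _ => Nat.factorial_pos _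
  apply Nat.eq_of_mul_eq_mul_right hpos
  have spec1 := Nat.multinomial_spec (Finset.univ : Finset (Fin (m + 1))) g
  have spec2 := Nat.multinomial_spec (Finset.univ : Finset (Fin m)) (g ∘ Fin.succ)
  simp only [Function.comp_apply] at spec2
  have hle : g 0 ≤ ∑ i, g i := Finset.single_le_sum (fun i _ => Nat.zero_le _) (mem_univ 0)
  have hsum : ∑ i, g i = g 0 + ∑ i : Fin m, g i.succ := Fin.sum_univ_succ g
  have hprod : ∏ i, (g i)! = (g 0)! * ∏ i : Fin m, (g i.succ)! := Fin.prod_univ_succ _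
  calc Nat.multinomial Finset.univ g * ∏ i, (g i)!
      = (∏ i, (g i)!) * Nat.multinomial Finset.univ g := by ring
    _ = (∑ i, g i)! := spec1
    _ = (∑ i, g i).choose (g 0) * (g 0)! * (∑ i : Fin m, g i.succ)! := by
        rw [← Nat.choose_mul_factorial_mul_factorial hle]
        congr 2
        omega
    _ = (∑ i, g i).choose (g 0) * (g 0)! *
          ((∏ i : Fin m, (g i.succ)!) * Nat.multinomial Finset.univ (g ∘ Fin.succ)) := by
        rw [← spec2]
    _ = (∑ i, g i).choose (g 0) * Nat.multinomial Finset.univ (g ∘ Fin.succ) * ∏ i, (g i)! := by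
        rw [hprod]; ring

end PFIE

namespace PFIE

lemma comp_blocks_ne {n : ℕ} (hn : 1 ≤ n) (c : Composition n) : c.blocks ≠ [] := by
  intro h
  have := c.blocks_sum
  rw [h] at this
  simp at this
  omega

lemma peel_term {x : ℕ → ℕ} {n i : ℕ} (hi : i < n) (c' : Composition (n - (i + 1)))
    (c : Composition n) (hcb : c.blocks = (i + 1) :: c'.blocks) :
    (-1 : ℤ) ^ (n - c.length) * (Nat.multinomial Finset.univ c.blocksFun : ℤ) *
      ∏ k : Fin c.length, (x (1 + c.sizeUpTo k.val) : ℤ) ^ c.blocksFun k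
    = (-1 : ℤ) ^ i * (n.choose (i + 1)) * (x 1 : ℤ) ^ (i + 1) *
      ((-1 : ℤ) ^ ((n - (i + 1)) - c'.length) * (Nat.multinomial Finset.univ c'.blocksFun : ℤ) *
        ∏ k : Fin c'.length, (shift x (i + 1) (1 + c'.sizeUpTo k.val) : ℤ) ^ c'.blocksFun k) := by
  obtain ⟨blocks, hpos, hsum⟩ := c
  simp only at hcb
  subst hcb
  have hlen : (Composition.mk ((i + 1) :: c'.blocks) hpos hsum).length = c'.length + 1 := rfl
  have hLle : c'.length ≤ n - (i + 1) := c'.length_le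
  have hb0 : (Composition.mk ((i + 1) :: c'.blocks) hpos hsum).blocksFun (0 : Fin (c'.length + 1)) = i + 1 := by
    simp [Composition.blocksFun]
  have hbs : (Composition.mk ((i + 1) :: c'.blocks) hpos hsum).blocksFun ∘ Fin.succ
      = c'.blocksFun := funext fun k => rfl
  have hsg : (-1 : ℤ) ^ (n - (Composition.mk ((i + 1) :: c'.blocks) hpos hsum).length)
      = (-1 : ℤ) ^ i * (-1 : ℤ) ^ ((n - (i + 1)) - c'.length) := by
    rw [hlen, show n - (c'.length + 1) = i + ((n - (i + 1)) - c'.length) from by omega, pow_add]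
  have hmult : (Nat.multinomial Finset.univ
        (Composition.mk ((i + 1) :: c'.blocks) hpos hsum).blocksFun : ℕ)
      = n.choose (i + 1) * Nat.multinomial Finset.univ c'.blocksFun := by
    have hsum2 : (∑ k : Fin (c'.length + 1),
        (Composition.mk ((i + 1) :: c'.blocks) hpos hsum).blocksFun k) = n :=
      Composition.sum_blocksFun (Composition.mk ((i + 1) :: c'.blocks) hpos hsum)
    rw [multinomial_fin_succ (g := (Composition.mk ((i + 1) :: c'.blocks) hpos hsum).blocksFun),
      hsum2, hb0, hbs]
  have hprod : (∏ k : Fin (Composition.mk ((i + 1) :: c'.blocks) hpos hsum).length,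
        (x (1 + (Composition.mk ((i + 1) :: c'.blocks) hpos hsum).sizeUpTo k.val) : ℤ)
          ^ (Composition.mk ((i + 1) :: c'.blocks) hpos hsum).blocksFun k)
      = (x 1 : ℤ) ^ (i + 1) *
        ∏ k : Fin c'.length,
          (shift x (i + 1) (1 + c'.sizeUpTo k.val) : ℤ) ^ c'.blocksFun k := by
    rw [show (∏ k : Fin (Composition.mk ((i + 1) :: c'.blocks) hpos hsum).length,
        (x (1 + (Composition.mk ((i + 1) :: c'.blocks) hpos hsum).sizeUpTo k.val) : ℤ)
          ^ (Composition.mk ((i + 1) :: c'.blocks) hpos hsum).blocksFun k)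
        = ∏ k : Fin (c'.length + 1),
        (x (1 + (Composition.mk ((i + 1) :: c'.blocks) hpos hsum).sizeUpTo k.val) : ℤ)
          ^ (Composition.mk ((i + 1) :: c'.blocks) hpos hsum).blocksFun k from rfl,
      Fin.prod_univ_succ]
    have hhead : ((x (1 + (Composition.mk ((i + 1) :: c'.blocks) hpos hsum).sizeUpTo ((0 : Fin (c'.length + 1)) : ℕ)) : ℤ))
        ^ (Composition.mk ((i + 1) :: c'.blocks) hpos hsum).blocksFun (0 : Fin (c'.length + 1)) = (x 1 : ℤ) ^ (i + 1) := by
      simp [Composition.sizeUpTo, Composition.blocksFun]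
    have htail : ∀ k : Fin c'.length,
        ((x (1 + (Composition.mk ((i + 1) :: c'.blocks) hpos hsum).sizeUpTo ((Fin.succ k : Fin (c'.length + 1)) : ℕ)) : ℤ))
          ^ (Composition.mk ((i + 1) :: c'.blocks) hpos hsum).blocksFun (Fin.succ k)
        = (shift x (i + 1) (1 + c'.sizeUpTo k.val) : ℤ) ^ c'.blocksFun k := by
      intro k
      simp only [Composition.sizeUpTo, Composition.blocksFun, shift, Fin.val_succ,
        List.take_succ_cons, List.sum_cons, List.get_cons_succ]
      norm_num
      rw [show i + 1 + (List.take (↑k) c'.blocks).sum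
          = (List.take (↑k) c'.blocks).sum + (i + 1) from by omega, ← add_assoc]
    exact congrArg₂ (· * ·) hhead (Finset.prod_congr rfl fun k _ => htail k)
  rw [hsg, hmult, hprod]
  push_cast
  ring

open Classical in
lemma Tsum_succ {x : ℕ → ℕ} {n : ℕ} (hn : 1 ≤ n) :
    Tsum x n = ∑ i ∈ range n,
      (-1 : ℤ) ^ i * (n.choose (i + 1)) * (x 1 : ℤ) ^ (i + 1) *
        Tsum (shift x (i + 1)) (n - (i + 1)) := by
  classical
  have step2 : ∑ i ∈ range n,
      (-1 : ℤ) ^ i * (n.choose (i + 1)) * (x 1 : ℤ) ^ (i + 1) *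
        Tsum (shift x (i + 1)) (n - (i + 1))
      = ∑ i ∈ range n, ∑ c ∈ (univ : Finset (Composition (n - (i + 1)))),
          (-1 : ℤ) ^ i * (n.choose (i + 1)) * (x 1 : ℤ) ^ (i + 1) *
            ((-1 : ℤ) ^ ((n - (i + 1)) - c.length) *
              (Nat.multinomial Finset.univ c.blocksFun : ℤ) *
              ∏ k : Fin c.length,
                (shift x (i + 1) (1 + c.sizeUpTo k.val) : ℤ) ^ c.blocksFun k) := by
    apply Finset.sum_congr rfl
    intro i _
    rw [Tsum, Finset.mul_sum]
  rw [step2, Finset.sum_sigma']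
  symm
  apply Finset.sum_bij (i := fun p hp =>
    (⟨(p.1 + 1) :: p.2.blocks,
      by
        intro j hj
        rcases List.mem_cons.mp hj with rfl | hj'
        · omega
        · exact p.2.blocks_pos hj',
      by
        have hmem := (Finset.mem_sigma.mp hp).1
        rw [Finset.mem_range] at hmem
        have := p.2.blocks_sum
        rw [List.sum_cons, this]
        omega⟩ : Composition n))
  · -- maps into univ
    intro p hp
    exact Finset.mem_univ _
  · -- injective
    rintro ⟨i, c⟩ h1 ⟨i', c'⟩ h2 heq
    have hblocks : (i + 1) :: c.blocks = (i' + 1) :: c'.blocks := congrArg Composition.blocks heq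
    have hi : i = i' := by
      have := List.head_eq_of_cons_eq hblocks
      omega
    subst hi
    have htail : c.blocks = c'.blocks := List.tail_eq_of_cons_eq hblocks
    have : c = c' := Composition.ext htail
    rw [this]
  · -- surjective
    intro c _
    obtain ⟨b, l, hb⟩ := List.exists_cons_of_ne_nil (comp_blocks_ne hn c)
    have hb1 : 1 ≤ b := c.blocks_pos (by rw [hb]; exact List.mem_cons_self)
    have hbn : b ≤ n := by
      have := List.le_sum_of_mem (show b ∈ c.blocks by rw [hb]; exact List.mem_cons_self)
      rwa [c.blocks_sum] at this
    have hlsum : b + l.sum = n := by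
      have := c.blocks_sum
      rw [hb, List.sum_cons] at this
      exact this
    have hc2pos : ∀ {j}, j ∈ l → 0 < j :=
      fun hj => c.blocks_pos (by rw [hb]; exact List.mem_cons_of_mem _ hj)
    have hc2sum : l.sum = n - (b - 1 + 1) := by omega
    refine ⟨⟨b - 1, ⟨l, hc2pos, hc2sum⟩⟩, ?_, ?_⟩
    · rw [Finset.mem_sigma]
      constructor
      · show b - 1 ∈ range n
        exact Finset.mem_range.mpr (by omega)
      · exact Finset.mem_univ _
    · apply Composition.ext
      rw [hb]
      simp only
      congr 1
      omega
  · -- value equality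
    rintro ⟨i, c'⟩ hp
    have hmem := (Finset.mem_sigma.mp hp).1
    rw [Finset.mem_range] at hmem
    exact (peel_term hmem c' _ rfl).symm

end PFIE

namespace PFIE

lemma main : ∀ (n : ℕ) (x : ℕ → ℕ), (∀ m, 1 ≤ m → x m ≤ x (m + 1)) →
    (PF x n : ℤ) = Tsum x n := by
  intro n
  induction n using Nat.strong_induction_on with
  | _ n ih =>
    intro x hx
    rcases Nat.eq_zero_or_pos n with rfl | hn
    · rw [Tsum_zero, PF_zero]
      norm_num
    · rw [star hx hn, Tsum_succ hn]
      apply Finset.sum_congr rfl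
      intro i hi
      rw [Finset.mem_range] at hi
      rw [ih (n - (i + 1)) (by omega) (shift x (i + 1)) (shift_hx hx (i + 1))]

end PFIE

theorem pf_inclusion_exclusion_formula (x : ℕ → ℕ)
    (hx : ∀ m, 1 ≤ m → x m ≤ x (m + 1)) (n : ℕ) (hn : 1 ≤ n) :
    (PF x n : ℤ) = ∑ c : Composition n,
      (-1 : ℤ) ^ (n - c.length) *
        (Nat.multinomial Finset.univ c.blocksFun : ℤ) *
        ∏ i : Fin c.length, (x (1 + c.sizeUpTo i.val) : ℤ) ^ c.blocksFun i := by
  rw [PFIE.main n x hx, PFIE.Tsum]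
end

section
/- Let x : ℕ → ℕ (indexed from 1) be non-decreasing and n ≥ 1. In the free ℤ-module with basis the functions Fin n → ℕ (e.g., (Fin n → ℕ) →₀ ℤ), the following inclusion–exclusion identity holds: Σ_{f an x-parking function of length n} [f] = Σ_{(B_1, …, B_k) ordered set partition of Fin n} (−1)^{n − k} · Σ_{q : Fin n → ℕ, 1 ≤ q(i) ≤ p_B(i) for all i} [q], where [g] denotes the basis element indexed by g. (Every q with 1 ≤ q(i) ≤ p_B(i) pointwise is automatically an x-parking function, so both sides are supported on x-parking functions.) -/
/-- An ordered set partition of `Fin n`: a finite sequence of nonempty pairwise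
disjoint subsets of `Fin n` covering `Fin n`. -/
def IsOSP {n : ℕ} (B : List (Finset (Fin n))) : Prop :=
  (∀ b ∈ B, b.Nonempty) ∧ B.Pairwise Disjoint ∧ ∀ i : Fin n, ∃ b ∈ B, i ∈ b

/-- The primitive parking function `p_B` associated to an ordered set partition:
`p_B(i) = x(1 + |B_1| + ⋯ + |B_(j-1)|)` when `i ∈ B_j`. -/
def pB (x : ℕ → ℕ) {n : ℕ} (B : List (Finset (Fin n))) (i : Fin n) : ℕ :=
  x (1 + ((B.takeWhile (fun b => decide (i ∉ b))).map Finset.card).sum)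

namespace PFIE

open Finset

variable (x : ℕ → ℕ) {n : ℕ} (f : Fin n → ℕ)

/-- The set of indices with value at most `x m`. -/
def A (m : ℕ) : Finset (Fin n) := Finset.univ.filter (fun i => f i ≤ x m)

/-- Recursive form of the condition `f ≤ p_B`, with offset `m` (number of already
covered indices). -/
def Cond : ℕ → List (Finset (Fin n)) → Prop
  | _, [] => True
  | m, b :: B => (∀ i ∈ b, f i ≤ x (m + 1)) ∧ Cond (m + b.card) B

@[simp] lemma Cond_nil (m : ℕ) : Cond x f m ([] : List (Finset (Fin n))) := trivial

@[simp] lemma Cond_cons (m : ℕ) (b : Finset (Fin n)) (B : List (Finset (Fin n))) :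
    Cond x f m (b :: B) ↔ (∀ i ∈ b, f i ≤ x (m + 1)) ∧ Cond x f (m + b.card) B := Iff.rfl

/-- Ordered set partitions of the complement of `S` satisfying the bound condition. -/
def Lset (S : Finset (Fin n)) : Set (List (Finset (Fin n))) :=
  {B | (∀ b ∈ B, b.Nonempty) ∧ B.Pairwise Disjoint ∧
    (∀ i : Fin n, i ∉ S → ∃ b ∈ B, i ∈ b) ∧ (∀ b ∈ B, ∀ i ∈ b, i ∉ S) ∧
    Cond x f S.card B}

lemma finite_aux :
    {B : List (Finset (Fin n)) | (∀ b ∈ B, b.Nonempty) ∧ B.Pairwise Disjoint}.Finite := by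
  apply (List.finite_length_le (Finset (Fin n)) (Fintype.card (Finset (Fin n)))).subset
  rintro B ⟨h1, h2⟩
  have hnd : B.Nodup := by
    refine List.Pairwise.imp_of_mem ?_ h2
    intro a b ha _ hab
    intro h
    subst h
    exact (h1 a ha).ne_empty (by simpa using disjoint_self.mp hab)
  exact hnd.length_le_card

lemma Lset_finite (S : Finset (Fin n)) : (Lset x f S).Finite :=
  (finite_aux).subset fun B hB => ⟨hB.1, hB.2.1⟩

lemma OSP_finite : {B : List (Finset (Fin n)) | IsOSP B}.Finite :=
  (finite_aux).subset fun B hB => ⟨hB.1, hB.2.1⟩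

lemma nil_mem_Lset {S : Finset (Fin n)} : ([] : List (Finset (Fin n))) ∈ Lset x f S ↔ S = univ := by
  constructor
  · rintro ⟨-, -, hcov, -, -⟩
    refine Finset.eq_univ_of_forall fun i => ?_
    by_contra hi
    obtain ⟨b, hb, -⟩ := hcov i hi
    exact absurd hb List.not_mem_nil
  · rintro rfl
    exact ⟨by simp, by simp, fun i hi => absurd (mem_univ i) hi, by simp, trivial⟩

lemma cons_mem_Lset {S b : Finset (Fin n)} {B : List (Finset (Fin n))} :
    (b :: B) ∈ Lset x f S ↔
      b.Nonempty ∧ b ⊆ A x f (S.card + 1) \ S ∧ B ∈ Lset x f (S ∪ b) := by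
  constructor
  · rintro ⟨h1, h2, h3, h4, h5, h6⟩
    rw [List.pairwise_cons] at h2
    have hbne : b.Nonempty := h1 b (by simp)
    have hbS : ∀ i ∈ b, i ∉ S := h4 b (by simp)
    have hdisj : Disjoint S b := Finset.disjoint_left.mpr fun {i} hi hib => hbS i hib hi
    have hcard : (S ∪ b).card = S.card + b.card := by
      rw [card_union_of_disjoint hdisj]
    refine ⟨hbne, fun i hi => Finset.mem_sdiff.mpr ⟨by simp [A, h5 i hi], hbS i hi⟩,
      ?_, ?_, ?_, ?_, ?_⟩
    · exact fun b' hb' => h1 b' (by simp [hb'])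
    · exact h2.2
    · intro i hi
      have hiS : i ∉ S := fun h => hi (Finset.mem_union_left _ h)
      have hib : i ∉ b := fun h => hi (Finset.mem_union_right _ h)
      obtain ⟨b', hb', hib'⟩ := h3 i hiS
      rcases List.mem_cons.mp hb' with rfl | hb'
      · exact absurd hib' hib
      · exact ⟨b', hb', hib'⟩
    · intro b' hb' i hi hiSb
      rcases Finset.mem_union.mp hiSb with h | h
      · exact h4 b' (by simp [hb']) i hi h
      · exact Finset.disjoint_left.mp (h2.1 b' hb') h hi
    · rw [hcard]; exact h6
  · rintro ⟨hbne, hbD, h1, h2, h3, h4, h5⟩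
    have hbS : ∀ i ∈ b, i ∉ S := fun i hi => (Finset.mem_sdiff.mp (hbD hi)).2
    have hdisj : Disjoint S b := Finset.disjoint_left.mpr fun {i} hi hib => hbS i hib hi
    have hcard : (S ∪ b).card = S.card + b.card := by
      rw [card_union_of_disjoint hdisj]
    refine ⟨?_, ?_, ?_, ?_, ?_⟩
    · intro b' hb'
      rcases List.mem_cons.mp hb' with rfl | hb'
      · exact hbne
      · exact h1 b' hb'
    · rw [List.pairwise_cons]
      refine ⟨fun b' hb' => Finset.disjoint_left.mpr fun {i} hib hib' => ?_, h2⟩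
      exact h4 b' hb' i hib' (Finset.mem_union_right _ hib)
    · intro i hi
      by_cases hib : i ∈ b
      · exact ⟨b, by simp, hib⟩
      · obtain ⟨b', hb', hib'⟩ := h3 i (fun h => (Finset.mem_union.mp h).elim hi hib)
        exact ⟨b', by simp [hb'], hib'⟩
    · intro b' hb' i hi
      rcases List.mem_cons.mp hb' with rfl | hb'
      · exact hbS i hi
      · exact fun h => h4 b' hb' i hi (Finset.mem_union_left _ h)
    · rw [Cond_cons]
      exact ⟨fun i hi => (Finset.mem_filter.mp (Finset.mem_sdiff.mp (hbD hi)).1).2, by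
        rw [← hcard]; exact h5⟩

lemma Lset_length_le : ∀ (B : List (Finset (Fin n))) (S : Finset (Fin n)),
    B ∈ Lset x f S → B.length + S.card ≤ n := by
  intro B
  induction B with
  | nil =>
      intro S _
      simpa using (Finset.card_le_univ S).trans_eq (by simp)
  | cons b B ih =>
      intro S hB
      obtain ⟨hbne, hbD, hB'⟩ := (cons_mem_Lset x f).mp hB
      have := ih (S ∪ b) hB'
      have hdisj : Disjoint S b :=
        Finset.disjoint_left.mpr fun {i} hi hib => (Finset.mem_sdiff.mp (hbD hib)).2 hi
      rw [card_union_of_disjoint hdisj] at this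
      have hb1 : 1 ≤ b.card := Finset.card_pos.mpr hbne
      simp only [List.length_cons]
      omega

lemma x_mono (hx : ∀ m, 1 ≤ m → x m ≤ x (m + 1)) :
    ∀ k k', 1 ≤ k → k ≤ k' → x k ≤ x k' := by
  intro k k' hk hkk
  induction k' with
  | zero => omega
  | succ k' ih =>
      rcases Nat.lt_or_ge k (k' + 1) with h | h
      · have hk' : 1 ≤ k' := by omega
        exact (ih (by omega)).trans (hx k' hk')
      · have : k = k' + 1 := by omega
        subst this; rfl

lemma A_mono (hx : ∀ m, 1 ≤ m → x m ≤ x (m + 1)) {k k' : ℕ} (hk : 1 ≤ k) (hkk : k ≤ k') :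
    A x f k ⊆ A x f k' := by
  intro i hi
  simp only [A, mem_filter, mem_univ, true_and] at hi ⊢
  exact hi.trans (x_mono x hx k k' hk hkk)

lemma neg_one_pow_sub {a b : ℕ} (h : b ≤ a) :
    ((-1 : ℤ)) ^ (a - b) = (-1) ^ a * (-1) ^ b := by
  have h1 : a - b + (b + b) = a + b := by omega
  calc ((-1 : ℤ)) ^ (a - b) = (-1) ^ (a - b) * ((-1) ^ (b + b)) := by
        rw [← two_mul, pow_mul]; norm_num
    _ = (-1) ^ (a + b) := by rw [← pow_add, h1]
    _ = (-1) ^ a * (-1) ^ b := by rw [pow_add]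

open scoped Classical in
/-- The key signed count over partial ordered set partitions. -/
lemma key (hx : ∀ m, 1 ≤ m → x m ≤ x (m + 1)) :
    ∀ (k : ℕ) (S : Finset (Fin n)), n - S.card = k → S ⊆ A x f (S.card + 1) →
      ∑ᶠ B ∈ Lset x f S, ((-1 : ℤ) ^ B.length) =
        if (∀ m', S.card < m' → m' ≤ n → m' ≤ (A x f m').card)
        then (-1 : ℤ) ^ (n - S.card) else 0 := by
  intro k
  induction k using Nat.strong_induction_on with
  | _ k IH =>
    intro S hk hS
    by_cases hSu : S = univ
    · subst hSu
      have hcard : (univ : Finset (Fin n)).card = n := by simp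
      have hLs : Lset x f (univ : Finset (Fin n)) = {[]} := by
        ext B
        constructor
        · intro hB
          cases B with
          | nil => rfl
          | cons b B' =>
              obtain ⟨hbne, hbD, -⟩ := (cons_mem_Lset x f).mp hB
              obtain ⟨i, hi⟩ := hbne
              exact absurd (Finset.mem_sdiff.mp (hbD hi)).2 (by simp)
        · rintro rfl
          exact (nil_mem_Lset x f).mpr rfl
      rw [hLs, finsum_mem_singleton]
      rw [if_pos (fun m' h1 h2 => by omega)]
      simp [hcard]
    · -- S ≠ univ
      set m := S.card with hm
      have hmn : m < n := by
        have := Finset.card_lt_card (Finset.ssubset_univ_iff.mpr hSu)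
        simpa using this
      set D : Finset (Fin n) := A x f (m + 1) \ S with hD
      set 𝒟 : Finset (Finset (Fin n)) := D.powerset.erase ∅ with h𝒟
      -- decomposition of Lset S
      have hdecomp : Lset x f S = ⋃ b ∈ (𝒟 : Set (Finset (Fin n))),
          (List.cons b) '' Lset x f (S ∪ b) := by
        ext B
        constructor
        · intro hB
          cases B with
          | nil =>
              exact absurd ((nil_mem_Lset x f).mp hB) hSu
          | cons b B' =>
              obtain ⟨hbne, hbD', hB'⟩ := (cons_mem_Lset x f).mp hB
              have hb𝒟 : b ∈ (𝒟 : Set (Finset (Fin n))) := by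
                rw [h𝒟]
                exact Finset.mem_coe.mpr (Finset.mem_erase.mpr
                  ⟨hbne.ne_empty, Finset.mem_powerset.mpr (by rw [hD]; exact hbD')⟩)
              exact Set.mem_biUnion hb𝒟 ⟨B', hB', rfl⟩
        · intro hB
          simp only [Set.mem_iUnion, Set.mem_image, Finset.mem_coe, exists_prop] at hB
          obtain ⟨b, hb𝒟, B', hB', rfl⟩ := hB
          rw [h𝒟] at hb𝒟
          have hbne := Finset.ne_of_mem_erase hb𝒟
          have hbD : b ⊆ D := Finset.mem_powerset.mp (Finset.mem_of_mem_erase hb𝒟)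
          rw [hD] at hbD
          exact (cons_mem_Lset x f).mpr ⟨Finset.nonempty_iff_ne_empty.mpr hbne, hbD, hB'⟩
      have hpd : (𝒟 : Set (Finset (Fin n))).PairwiseDisjoint
          (fun b => (List.cons b) '' Lset x f (S ∪ b)) := by
        intro b1 _ b2 _ hne
        simp only [Function.onFun]
        rw [Set.disjoint_left]
        rintro B ⟨B1, -, rfl⟩ hB2
        obtain ⟨B2, -, hB2⟩ := hB2
        exact hne (by injection hB2 with h _; exact h.symm)
      rw [hdecomp, finsum_mem_biUnion hpd (Finset.finite_toSet _)
        (fun b _ => ((Lset_finite x f (S ∪ b)).image _)), finsum_mem_coe_finset]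
      have hterm : ∀ b ∈ 𝒟, (∑ᶠ B ∈ (List.cons b) '' Lset x f (S ∪ b), ((-1 : ℤ) ^ B.length))
          = -(if (∀ m', m + b.card < m' → m' ≤ n → m' ≤ (A x f m').card)
              then (-1 : ℤ) ^ (n - (m + b.card)) else 0) := by
        intro b hb
        rw [h𝒟] at hb
        have hbD : b ⊆ D := Finset.mem_powerset.mp (Finset.mem_of_mem_erase hb)
        rw [hD] at hbD
        have hbne : b ≠ ∅ := Finset.ne_of_mem_erase hb
        have hb1 : 1 ≤ b.card := Finset.card_pos.mpr (Finset.nonempty_iff_ne_empty.mpr hbne)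
        have hdisj : Disjoint S b :=
          Finset.disjoint_left.mpr fun {i} hi hib => (Finset.mem_sdiff.mp (hbD hib)).2 hi
        have hcard : (S ∪ b).card = m + b.card := by rw [card_union_of_disjoint hdisj]
        have hsub : S ∪ b ⊆ A x f ((S ∪ b).card + 1) := by
          rw [hcard]
          have h1 : A x f (m + 1) ⊆ A x f (m + b.card + 1) :=
            A_mono x f hx (by omega) (by omega)
          intro i hi
          rcases Finset.mem_union.mp hi with h | h
          · exact h1 (hS h)
          · exact h1 (Finset.mem_sdiff.mp (hbD h)).1
        have hlt : n - (S ∪ b).card < k := by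
          rw [hcard]; omega
        have hIH := IH _ hlt (S ∪ b) rfl hsub
        rw [finsum_mem_image (fun B1 _ B2 _ h => by injection h)]
        rw [finsum_mem_eq_finite_toFinset_sum _ (Lset_finite x f (S ∪ b))] at hIH ⊢
        simp only [List.length_cons]
        have : ∀ B' ∈ (Lset_finite x f (S ∪ b)).toFinset,
            ((-1 : ℤ) ^ (B'.length + 1)) = (-1) * (-1) ^ B'.length := by
          intro B' _; rw [pow_succ]; ring
        rw [Finset.sum_congr rfl this, ← Finset.mul_sum, hIH, hcard]
        ring
      rw [Finset.sum_congr rfl hterm]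
      -- now two cases on D
      by_cases hDe : D = ∅
      · have h𝒟e : 𝒟 = ∅ := by
          rw [h𝒟, hDe, Finset.powerset_empty]
          simp
        rw [h𝒟e]
        have hfail : ¬(∀ m', m < m' → m' ≤ n → m' ≤ (A x f m').card) := by
          intro h
          have h1 := h (m + 1) (by omega) (by omega)
          have h2 : A x f (m + 1) ⊆ S := by
            intro i hi
            by_contra hiS
            have : i ∈ D := Finset.mem_sdiff.mpr ⟨hi, hiS⟩
            rw [hDe] at this
            exact absurd this (Finset.notMem_empty i)
          have := Finset.card_le_card h2
          omega
        rw [if_neg hfail]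
        simp
      · -- D nonempty
        have hDcard : (A x f (m + 1)).card = m + D.card := by
          have := Finset.card_sdiff_add_card_eq_card hS
          rw [← hD] at this
          omega
        have hDn : m + D.card ≤ n := by
          have := Finset.card_le_univ (A x f (m + 1))
          simp only [Finset.card_univ, Fintype.card_fin] at this
          omega
        have hPiff : ∀ b ∈ 𝒟,
            ((∀ m', m + b.card < m' → m' ≤ n → m' ≤ (A x f m').card) ↔
             (∀ m', m < m' → m' ≤ n → m' ≤ (A x f m').card)) := by
          intro b hb
          rw [h𝒟] at hb
          have hbD : b ⊆ D := Finset.mem_powerset.mp (Finset.mem_of_mem_erase hb)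
          have hb1 : 1 ≤ b.card := Finset.card_pos.mpr
            (Finset.nonempty_iff_ne_empty.mpr (Finset.ne_of_mem_erase hb))
          have hbd : b.card ≤ D.card := Finset.card_le_card hbD
          constructor
          · intro h m' h1 h2
            rcases Nat.lt_or_ge (m + b.card) m' with h3 | h3
            · exact h m' h3 h2
            · have hmono := Finset.card_le_card
                (A_mono x f hx (k := m + 1) (k' := m') (by omega) (by omega))
              omega
          · intro h m' h1 h2
            exact h m' (by omega) h2
        by_cases hP : (∀ m', m < m' → m' ≤ n → m' ≤ (A x f m').card)
        · rw [if_pos hP]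
          have hterm2 : ∀ b ∈ 𝒟,
              (-(if (∀ m', m + b.card < m' → m' ≤ n → m' ≤ (A x f m').card)
                 then (-1 : ℤ) ^ (n - (m + b.card)) else 0))
              = (-1) * ((-1 : ℤ) ^ (n - m) * (-1) ^ b.card) := by
            intro b hb
            rw [if_pos ((hPiff b hb).mpr hP)]
            rw [h𝒟] at hb
            have hbd : b.card ≤ D.card := Finset.card_le_card
              (Finset.mem_powerset.mp (Finset.mem_of_mem_erase hb))
            have h1 : n - (m + b.card) = (n - m) - b.card := by omega
            have h2 : b.card ≤ n - m := by omega
            rw [h1, neg_one_pow_sub h2]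
            ring
          rw [Finset.sum_congr rfl hterm2, ← Finset.mul_sum]
          have hsum : ∑ b ∈ 𝒟, ((-1 : ℤ) ^ (n - m) * (-1) ^ b.card)
              = (-1 : ℤ) ^ (n - m) * ∑ b ∈ 𝒟, ((-1 : ℤ) ^ b.card) := by
            rw [Finset.mul_sum]
          rw [hsum]
          have hps : ∑ b ∈ 𝒟, ((-1 : ℤ) ^ b.card) = -1 := by
            have h0 : ∑ b ∈ D.powerset, ((-1 : ℤ) ^ b.card) = 0 :=
              Finset.sum_powerset_neg_one_pow_card_of_nonempty
                (Finset.nonempty_iff_ne_empty.mpr hDe)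
            have hmem : ∅ ∈ D.powerset := Finset.empty_mem_powerset D
            have := Finset.add_sum_erase _ (fun b => ((-1 : ℤ) ^ b.card)) hmem
            rw [h0] at this
            simp only [Finset.card_empty, pow_zero] at this
            rw [← h𝒟] at this
            linarith
          rw [hps]
          ring
        · rw [if_neg hP]
          have hterm2 : ∀ b ∈ 𝒟,
              (-(if (∀ m', m + b.card < m' → m' ≤ n → m' ≤ (A x f m').card)
                 then (-1 : ℤ) ^ (n - (m + b.card)) else 0)) = 0 := by
            intro b hb
            rw [if_neg (fun h => hP ((hPiff b hb).mp h))]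
            ring
          rw [Finset.sum_congr rfl hterm2]
          simp

/-- Bridge between `Cond` and the `pB`-condition. -/
lemma cond_iff : ∀ (B : List (Finset (Fin n))) (m : ℕ), B.Pairwise Disjoint →
    (Cond x f m B ↔ ∀ b ∈ B, ∀ i ∈ b, f i ≤
      x (1 + (m + ((B.takeWhile (fun b' => decide (i ∉ b'))).map Finset.card).sum))) := by
  intro B
  induction B with
  | nil => intro m _; simp
  | cons b B' ih =>
      intro m hpw
      rw [List.pairwise_cons] at hpw
      have hdisj := hpw.1
      constructor
      · rintro ⟨h1, h2⟩ b' hb' i hi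
        rcases List.mem_cons.mp hb' with rfl | hb'
        · have : (List.takeWhile (fun b'' => decide (i ∉ b'')) (b' :: B')) = [] := by
            rw [List.takeWhile_cons]
            simp [hi]
          rw [this]
          simpa [Nat.add_comm] using h1 i hi
        · have hib : i ∉ b := fun h => Finset.disjoint_left.mp (hdisj b' hb') h hi
          have : (List.takeWhile (fun b'' => decide (i ∉ b'')) (b :: B'))
              = b :: List.takeWhile (fun b'' => decide (i ∉ b'')) B' := by
            rw [List.takeWhile_cons]
            simp [hib]
          rw [this]
          have := ((ih (m + b.card) hpw.2).mp h2) b' hb' i hi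
          simp only [List.map_cons, List.sum_cons]
          convert this using 2
          omega
      · intro h
        constructor
        · intro i hi
          have := h b (by simp) i hi
          have ht : (List.takeWhile (fun b'' => decide (i ∉ b'')) (b :: B')) = [] := by
            rw [List.takeWhile_cons]
            simp [hi]
          rw [ht] at this
          simpa [Nat.add_comm] using this
        · rw [ih (m + b.card) hpw.2]
          intro b' hb' i hi
          have hib : i ∉ b := fun hh => Finset.disjoint_left.mp (hdisj b' hb') hh hi
          have := h b' (by simp [hb']) i hi
          have ht : (List.takeWhile (fun b'' => decide (i ∉ b'')) (b :: B'))
              = b :: List.takeWhile (fun b'' => decide (i ∉ b'')) B' := by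
            rw [List.takeWhile_cons]
            simp [hib]
          rw [ht] at this
          simp only [List.map_cons, List.sum_cons] at this
          convert this using 2
          omega

end PFIE

open PFIE Finset in
theorem pf_polytope_inclusion_exclusion (x : ℕ → ℕ)
    (hx : ∀ m, 1 ≤ m → x m ≤ x (m + 1)) (n : ℕ) (hn : 1 ≤ n) :
    ∑ᶠ f ∈ {f : Fin n → ℕ | IsPF x f}, Finsupp.single f (1 : ℤ) =
      ∑ᶠ B ∈ {B : List (Finset (Fin n)) | IsOSP B},
        ((-1 : ℤ) ^ (n - B.length)) •
          ∑ᶠ q ∈ {q : Fin n → ℕ | ∀ i, 1 ≤ q i ∧ q i ≤ pB x B i},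
            Finsupp.single q (1 : ℤ) := by
  classical
  -- finiteness facts
  have hPFfin : {f : Fin n → ℕ | IsPF x f}.Finite := by
    apply (Set.Finite.pi (fun i : Fin n => Set.finite_Iic (x n))).subset
    rintro f ⟨h1, h2⟩
    have := h2 n hn le_rfl
    have hfill : (Finset.univ.filter (fun i => f i ≤ x n)) = Finset.univ := by
      apply Finset.eq_univ_of_card
      have := Finset.card_le_univ (Finset.univ.filter (fun i => f i ≤ x n))
      simp only [Finset.card_univ, Fintype.card_fin] at this ⊢
      omega
    intro i _
    have hi : i ∈ Finset.univ.filter (fun i => f i ≤ x n) := by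
      rw [hfill]; exact Finset.mem_univ i
    exact (Finset.mem_filter.mp hi).2
  have hQfin : ∀ B : List (Finset (Fin n)),
      {q : Fin n → ℕ | ∀ i, 1 ≤ q i ∧ q i ≤ pB x B i}.Finite := by
    intro B
    apply (Set.Finite.pi (fun i : Fin n => Set.finite_Iic (pB x B i))).subset
    rintro q hq i _
    exact (hq i).2
  have hOSPfin := OSP_finite (n := n)
  rw [finsum_mem_eq_finite_toFinset_sum _ hPFfin, finsum_mem_eq_finite_toFinset_sum _ hOSPfin]
  have hinner : ∀ B : List (Finset (Fin n)),
      (∑ᶠ q ∈ {q : Fin n → ℕ | ∀ i, 1 ≤ q i ∧ q i ≤ pB x B i}, Finsupp.single q (1 : ℤ))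
      = ∑ q ∈ (hQfin B).toFinset, Finsupp.single q (1 : ℤ) :=
    fun B => finsum_mem_eq_finite_toFinset_sum _ (hQfin B)
  ext f0
  rw [Finsupp.finset_sum_apply, Finsupp.finset_sum_apply]
  have hLHS : (∑ f ∈ hPFfin.toFinset, (Finsupp.single f (1 : ℤ)) f0)
      = if IsPF x f0 then 1 else 0 := by
    simp only [Finsupp.single_apply]
    rw [Finset.sum_ite_eq' hPFfin.toFinset f0 (fun _ => (1 : ℤ))]
    simp [Set.Finite.mem_toFinset]
  rw [hLHS]
  have hRHS : ∀ B ∈ hOSPfin.toFinset,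
      (((-1 : ℤ) ^ (n - B.length)) •
        ∑ᶠ q ∈ {q : Fin n → ℕ | ∀ i, 1 ≤ q i ∧ q i ≤ pB x B i},
          Finsupp.single q (1 : ℤ)) f0
      = ((-1 : ℤ) ^ (n - B.length)) * (if (∀ i, 1 ≤ f0 i ∧ f0 i ≤ pB x B i) then 1 else 0) := by
    intro B _
    rw [hinner B, Finsupp.smul_apply, Finsupp.finset_sum_apply]
    simp only [Finsupp.single_apply]
    rw [Finset.sum_ite_eq' (hQfin B).toFinset f0 (fun _ => (1 : ℤ))]
    simp [Set.Finite.mem_toFinset, smul_eq_mul]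
  rw [Finset.sum_congr rfl hRHS]
  -- case on whether f0 is everywhere ≥ 1
  by_cases hf1 : ∀ i, 1 ≤ f0 i
  · -- key computation
    have hkey := key x f0 hx n ∅ (by simp) (by simp)
    simp only [Finset.card_empty, Nat.sub_zero] at hkey
    -- identify the filtered OSP set with Lset ∅
    have hsetid : ∀ B : List (Finset (Fin n)),
        (IsOSP B ∧ (∀ i, 1 ≤ f0 i ∧ f0 i ≤ pB x B i)) ↔ B ∈ Lset x f0 ∅ := by
      intro B
      constructor
      · rintro ⟨⟨h1, h2, h3⟩, h4⟩
        refine ⟨h1, h2, fun i _ => h3 i, by simp, ?_⟩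
        rw [Finset.card_empty, cond_iff x f0 B 0 h2]
        intro b hb i hi
        simpa [pB] using (h4 i).2
      · rintro ⟨h1, h2, h3, -, h5⟩
        rw [Finset.card_empty, cond_iff x f0 B 0 h2] at h5
        refine ⟨⟨h1, h2, fun i => h3 i (Finset.notMem_empty i)⟩, fun i => ⟨hf1 i, ?_⟩⟩
        obtain ⟨b, hb, hib⟩ := h3 i (Finset.notMem_empty i)
        simpa [pB] using h5 b hb i hib
    have hfil : hOSPfin.toFinset.filter (fun B => ∀ i, 1 ≤ f0 i ∧ f0 i ≤ pB x B i)
        = (Lset_finite x f0 ∅).toFinset := by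
      ext B
      simp only [Finset.mem_filter, Set.Finite.mem_toFinset, Set.mem_setOf_eq]
      exact hsetid B
    calc (if IsPF x f0 then (1 : ℤ) else 0)
        = (-1 : ℤ) ^ n * (if (∀ m', 0 < m' → m' ≤ n → m' ≤ (A x f0 m').card)
            then (-1 : ℤ) ^ n else 0) := by
          by_cases hP : ∀ m', 0 < m' → m' ≤ n → m' ≤ (A x f0 m').card
          · rw [if_pos hP, if_pos ⟨hf1, fun k hk1 hk2 => hP k hk1 hk2⟩, ← pow_add,
              ← two_mul, pow_mul]
            norm_num
          · rw [if_neg hP, if_neg ?_, mul_zero]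
            rintro ⟨-, h2⟩
            exact hP fun m' h1' h2' => h2 m' h1' h2'
      _ = (-1 : ℤ) ^ n * ∑ᶠ B ∈ Lset x f0 ∅, ((-1 : ℤ) ^ B.length) := by rw [hkey]; congr
      _ = ∑ B ∈ (Lset_finite x f0 ∅).toFinset, ((-1 : ℤ) ^ n * (-1) ^ B.length) := by
          rw [finsum_mem_eq_finite_toFinset_sum _ (Lset_finite x f0 ∅), Finset.mul_sum]
      _ = ∑ B ∈ (Lset_finite x f0 ∅).toFinset, ((-1 : ℤ) ^ (n - B.length)) := by
          apply Finset.sum_congr rfl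
          intro B hB
          have hlen : B.length ≤ n := by
            have := Lset_length_le x f0 B ∅ (by simpa [Set.Finite.mem_toFinset] using hB)
            simpa using this
          rw [neg_one_pow_sub hlen]
      _ = ∑ B ∈ hOSPfin.toFinset,
            (if (∀ i, 1 ≤ f0 i ∧ f0 i ≤ pB x B i) then ((-1 : ℤ) ^ (n - B.length)) else 0) := by
          rw [← hfil, Finset.sum_filter]
      _ = ∑ B ∈ hOSPfin.toFinset,
            ((-1 : ℤ) ^ (n - B.length)) *
              (if (∀ i, 1 ≤ f0 i ∧ f0 i ≤ pB x B i) then 1 else 0) := by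
          apply Finset.sum_congr rfl
          intro B _
          rw [mul_ite, mul_one, mul_zero]
  · -- f0 has a value 0 : both sides vanish
    push_neg at hf1
    obtain ⟨i0, hi0⟩ := hf1
    have h1 : ¬ IsPF x f0 := fun h => absurd (h.1 i0) (by omega)
    rw [if_neg h1]
    symm
    apply Finset.sum_eq_zero
    intro B _
    rw [if_neg, mul_zero]
    intro h
    exact absurd ((h i0).1) (by omega)
end
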